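/- arXiv:2502.20322 — 8 statements merged into one kernel-verified Lean document; each statement's English description precedes it below -/
import Mathlib

section
/- Let q be a squarefree positive integer. For a ∈ Z/qZ define D(a) = { b ∈ Z/qZ : b^(p) ≤ a^(p) for all primes p dividing q }, where x^(p) ∈ {0, 1, ..., p−1} denotes the residue of x mod p. Then the sumset of two downsets in Z/qZ is again a downset, where A ⊆ Z/qZ is a downset if a ∈ A implies D(a) ⊆ A. -/
open Pointwise

/-- The "box" below `a` in `ZMod q`: all `b` whose residue mod every prime `p ∣ q`
is at most that of `a`. -/
def downBox (q : ℕ) (a : ZMod q) : Set (ZMod q) :=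
  {b | ∀ p : ℕ, p.Prime → p ∣ q → b.val % p ≤ a.val % p}

/-- A downset in `ZMod q`. -/
def IsDownset (q : ℕ) (A : Set (ZMod q)) : Prop :=
  ∀ a ∈ A, downBox q a ⊆ A

/-- CRT existence: for squarefree `q`, one can prescribe residues mod each prime divisor. -/
lemma crt_exists (q : ℕ) (hq : 0 < q) (hsf : Squarefree q) (f : ℕ → ℕ) :
    ∃ x : ZMod q, ∀ p : ℕ, p.Prime → p ∣ q → x.val % p = f p % p := by
  haveI : NeZero q := ⟨hq.ne'⟩
  have hs : ∀ p ∈ q.primeFactors, (id p : ℕ) ≠ 0 :=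
    fun p hp => (Nat.prime_of_mem_primeFactors hp).ne_zero
  have pp : Set.Pairwise (q.primeFactors : Set ℕ) (Function.onFun Nat.Coprime id) := by
    intro p hp r hr hne
    exact (Nat.coprime_primes (Nat.prime_of_mem_primeFactors hp)
      (Nat.prime_of_mem_primeFactors hr)).mpr hne
  obtain ⟨k, hk⟩ := Nat.chineseRemainderOfFinset f id q.primeFactors hs pp
  refine ⟨(k : ZMod q), fun p hp hpq => ?_⟩
  have hm : p ∈ q.primeFactors := Nat.mem_primeFactors.mpr ⟨hp, hpq, hq.ne'⟩
  have hval : ((k : ZMod q)).val = k % q := ZMod.val_natCast (a := k) q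
  rw [hval, Nat.mod_mod_of_dvd k hpq]
  exact hk p hm

theorem sumset_of_downsets_is_downset (q : ℕ) (hq : 0 < q) (hsf : Squarefree q)
    (A B : Set (ZMod q)) (hA : IsDownset q A) (hB : IsDownset q B) :
    IsDownset q (A + B) := by
  haveI : NeZero q := ⟨hq.ne'⟩
  rintro c hc d hd
  obtain ⟨a, ha, b, hb, rfl⟩ := hc
  obtain ⟨x, hx⟩ := crt_exists q hq hsf (fun p => min (d.val % p) (a.val % p))
  -- residues of x
  have hxp : ∀ p : ℕ, p.Prime → p ∣ q → x.val % p = min (d.val % p) (a.val % p) := by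
    intro p hp hpq
    rw [hx p hp hpq]
    exact Nat.mod_eq_of_lt (lt_of_le_of_lt (min_le_right _ _)
      (Nat.mod_lt _ hp.pos))
  have hxA : x ∈ downBox q a := by
    intro p hp hpq
    rw [hxp p hp hpq]; exact min_le_right _ _
  have hdB : d - x ∈ downBox q b := by
    intro p hp hpq
    -- (d - x).val ≡ d.val - x.val mod p
    have hle : x.val % p ≤ d.val % p := by
      rw [hxp p hp hpq]; exact min_le_left _ _
    have h1 : (d - x).val + x.val ≡ d.val [MOD p] := by
      have : ((d - x).val + x.val) % q = d.val % q := by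
        rw [← ZMod.val_add, sub_add_cancel, Nat.mod_eq_of_lt (ZMod.val_lt d)]
      have := congrArg (· % p) this
      simpa [Nat.mod_mod_of_dvd _ hpq, Nat.ModEq] using this
    -- d.val % p ≤ (a+b).val % p ≤ a.val%p + b.val%p
    have h2 : d.val % p ≤ a.val % p + b.val % p := by
      have hd' := hd p hp hpq
      have : (a + b).val % p = (a.val + b.val) % p := by
        have : (a + b).val % q = (a.val + b.val) % q := by
          simp [ZMod.val_add]
        have := congrArg (· % p) this
        simpa [Nat.mod_mod_of_dvd _ hpq] using this
      calc d.val % p ≤ (a + b).val % p := hd'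
        _ = (a.val + b.val) % p := this
        _ = (a.val % p + b.val % p) % p := by rw [Nat.add_mod]
        _ ≤ a.val % p + b.val % p := Nat.mod_le _ _
    -- conclude: (d-x).val % p = d.val % p - x.val % p
    have h3 : (d - x).val % p = d.val % p - x.val % p := by
      have heq : ((d - x).val % p + x.val % p) % p = d.val % p := by
        rw [← Nat.add_mod]; exact h1
      have hu : (d - x).val % p < p := Nat.mod_lt _ hp.pos
      have hv : x.val % p < p := Nat.mod_lt _ hp.pos
      have hw : d.val % p < p := Nat.mod_lt _ hp.pos
      rcases lt_or_ge ((d - x).val % p + x.val % p) p with h | h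
      · rw [Nat.mod_eq_of_lt h] at heq; omega
      · rw [Nat.mod_eq_sub_mod h,
          Nat.mod_eq_of_lt (by omega : (d - x).val % p + x.val % p - p < p)] at heq
        omega
    rw [h3, hxp p hp hpq]
    rcases le_total (d.val % p) (a.val % p) with h | h
    · simp [min_eq_left h]
    · rw [min_eq_right h]
      omega
  have : d = x + (d - x) := by ring
  rw [this]
  exact Set.add_mem_add (hA a ha hxA) (hB b hb hdB)
end

section
/- Let q be a squarefree integer all of whose prime factors are at least 5, and let u ∈ Z/qZ satisfy u^(p) = (p−1)/2 for every prime p dividing q, where x^(p) denotes the residue of x mod p in {0,...,p−1}. Then the 4-fold sumset D(u−1) + D(u−1) + D(u−1) + D(u−1) equals Z/qZ, where D(a) = { b ∈ Z/qZ : b^(p) ≤ a^(p) for all p | q }. -/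
open Pointwise

theorem four_fold_sumset_of_middle_box (q : ℕ) (hsf : Squarefree q)
    (h5 : ∀ p : ℕ, p.Prime → p ∣ q → 5 ≤ p)
    (u : ZMod q) (hu : ∀ p : ℕ, p.Prime → p ∣ q → u.val % p = (p - 1) / 2) :
    downBox q (u - 1) + downBox q (u - 1) + downBox q (u - 1) + downBox q (u - 1)
      = Set.univ := by
  have hq0 : q ≠ 0 := by rintro rfl; exact not_squarefree_zero hsf
  haveI : NeZero q := ⟨hq0⟩
  apply Set.eq_univ_of_forall
  intro x
  set r : ℕ → ℕ := fun p => x.val % p with hrdef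
  set k : ℕ → ℕ := fun p => (p - 1) / 2 - 1 with hkdef
  set f1 : ℕ → ℕ := fun p => min (r p) (k p) with hf1
  set f2 : ℕ → ℕ := fun p => min (r p - f1 p) (k p) with hf2
  set f3 : ℕ → ℕ := fun p => min (r p - f1 p - f2 p) (k p) with hf3
  set f4 : ℕ → ℕ := fun p => r p - f1 p - f2 p - f3 p with hf4
  have key : ∀ p ∈ q.primeFactors,
      (f1 p ≤ k p ∧ f2 p ≤ k p ∧ f3 p ≤ k p ∧ f4 p ≤ k p) ∧
        f1 p + f2 p + f3 p + f4 p = r p := by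
    intro p hp
    have hpp := Nat.prime_of_mem_primeFactors hp
    have hdvd := Nat.dvd_of_mem_primeFactors hp
    have h5p := h5 p hpp hdvd
    obtain ⟨t, ht⟩ := hpp.odd_of_ne_two (by omega)
    have hrp : r p < p := Nat.mod_lt _ hpp.pos
    simp only [hf1, hf2, hf3, hf4, hkdef]
    omega
  -- CRT data
  have hprime : ∀ p ∈ q.primeFactors, p.Prime := fun p hp =>
    Nat.prime_of_mem_primeFactors hp
  have hs0 : ∀ p ∈ q.primeFactors, (id p : ℕ) ≠ 0 := fun p hp =>
    (hprime p hp).pos.ne'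
  have hco : Set.Pairwise (q.primeFactors : Set ℕ) (Function.onFun Nat.Coprime id) := by
    intro a ha b hb hab
    exact (Nat.coprime_primes (hprime a ha) (hprime b hb)).mpr hab
  obtain ⟨n1, hn1⟩ := Nat.chineseRemainderOfFinset f1 id q.primeFactors hs0 hco
  obtain ⟨n2, hn2⟩ := Nat.chineseRemainderOfFinset f2 id q.primeFactors hs0 hco
  obtain ⟨n3, hn3⟩ := Nat.chineseRemainderOfFinset f3 id q.primeFactors hs0 hco
  obtain ⟨n4, hn4⟩ := Nat.chineseRemainderOfFinset f4 id q.primeFactors hs0 hco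
  -- value of (u-1) mod p
  have hu1 : ∀ p ∈ q.primeFactors, (u - 1).val % p = k p := by
    intro p hp
    have hpp := hprime p hp
    have hdvd := Nat.dvd_of_mem_primeFactors hp
    have h5p := h5 p hpp hdvd
    have hup := hu p hpp hdvd
    have h2 : 2 ≤ u.val % p := by rw [hup]; omega
    have h1u : 1 ≤ u.val := le_trans (show 1 ≤ u.val % p by omega) (Nat.mod_le _ _)
    have hcast : ((u.val - 1 : ℕ) : ZMod q) = u - 1 := by
      rw [Nat.cast_sub h1u, Nat.cast_one, ZMod.natCast_val, ZMod.cast_id]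
    have hlt : u.val - 1 < q := lt_of_le_of_lt (Nat.sub_le _ _) (ZMod.val_lt u)
    have hval : (u - 1).val = u.val - 1 := by
      rw [← hcast, ZMod.val_cast_of_lt hlt]
    rw [hval]
    have hdm := Nat.div_add_mod u.val p
    have hsp : (p - 1) / 2 < p := by omega
    have : u.val - 1 = p * (u.val / p) + ((p - 1) / 2 - 1) := by omega
    rw [this, Nat.mul_add_mod, Nat.mod_eq_of_lt (by omega)]
  -- membership
  have mem : ∀ (n : ℕ) (f : ℕ → ℕ),
      (∀ p ∈ q.primeFactors, n ≡ f p [MOD p] ∧ f p ≤ k p) →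
      ((n : ZMod q) ∈ downBox q (u - 1)) := by
    intro n f h p hpp hdvd
    have hp : p ∈ q.primeFactors := Nat.mem_primeFactors.mpr ⟨hpp, hdvd, hq0⟩
    have hval : ((n : ZMod q)).val % p = n % p := by
      rw [ZMod.val_natCast, Nat.mod_mod_of_dvd _ hdvd]
    rw [hval, hu1 p hp, show n % p = f p % p from (h p hp).1]
    exact le_trans (Nat.mod_le _ _) (h p hp).2
  have m1 := mem n1 f1 (fun p hp => ⟨hn1 p hp, (key p hp).1.1⟩)
  have m2 := mem n2 f2 (fun p hp => ⟨hn2 p hp, (key p hp).1.2.1⟩)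
  have m3 := mem n3 f3 (fun p hp => ⟨hn3 p hp, (key p hp).1.2.2.1⟩)
  have m4 := mem n4 f4 (fun p hp => ⟨hn4 p hp, (key p hp).1.2.2.2⟩)
  -- the sum is x
  have hl : (q.primeFactors.toList).Pairwise (Function.onFun Nat.Coprime id) :=
    List.Nodup.pairwise_of_forall_ne q.primeFactors.nodup_toList
      (fun a ha b hb hab =>
        (Nat.coprime_primes (hprime a (by simpa using ha)) (hprime b (by simpa using hb))).mpr hab)
  have hmodq : n1 + n2 + n3 + n4 ≡ x.val [MOD q] := by
    have hprod : ((q.primeFactors.toList.map id).prod) = q := by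
      rw [Finset.prod_map_toList]
      exact Nat.prod_primeFactors_of_squarefree hsf
    have h' : n1 + n2 + n3 + n4 ≡ x.val [MOD (q.primeFactors.toList.map id).prod] := by
      refine (Nat.modEq_list_map_prod_iff hl).mpr ?_
      intro p hpl
      have hp : p ∈ q.primeFactors := by simpa using hpl
      have hstep : n1 + n2 + n3 + n4 ≡ f1 p + f2 p + f3 p + f4 p [MOD p] :=
        ((((hn1 p hp).add (hn2 p hp)).add (hn3 p hp)).add (hn4 p hp))
      refine hstep.trans ?_
      rw [(key p hp).2]
      exact (Nat.mod_modEq x.val p)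
    rwa [hprod] at h'
  have hsum : (n1 : ZMod q) + n2 + n3 + n4 = x := by
    have : ((n1 + n2 + n3 + n4 : ℕ) : ZMod q) = ((x.val : ℕ) : ZMod q) :=
      (ZMod.natCast_eq_natCast_iff _ _ _).mpr hmodq
    push_cast at this
    rwa [ZMod.natCast_val, ZMod.cast_id] at this
  rw [← hsum]
  exact Set.add_mem_add (Set.add_mem_add (Set.add_mem_add m1 m2) m3) m4
end

section
/- Let w ≥ 4 and W = 8 * ∏_{2 < p < w, p prime} p. Let Z(W) be the set of reduced quadratic residues modulo W, i.e., Z(W) = { b ∈ [W] : gcd(b, W) = 1 and b ≡ h^2 (mod W) for some h }. If E ⊆ Z(W) satisfies |E| > |Z(W)|/2, then for every integer n with n ≡ 8 (mod 24) there exist b_1, ..., b_8 ∈ E with n ≡ b_1 + b_2 + ... + b_8 (mod W). -/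
set_option linter.unusedSectionVars false

open Finset Pointwise

/-- square unit in a commutative ring -/
def IsSU {R : Type*} [CommRing R] (x : R) : Prop := (∃ y, x * y = 1) ∧ (∃ r, x = r * r)

lemma isSU_one {R : Type*} [CommRing R] : IsSU (1 : R) := ⟨⟨1, mul_one 1⟩, ⟨1, (mul_one 1).symm⟩⟩

lemma isSU_map {R S : Type*} [CommRing R] [CommRing S] (e : R ≃+* S) {x : R} (h : IsSU x) :
    IsSU (e x) := by
  obtain ⟨⟨y, hy⟩, ⟨r, hr⟩⟩ := h
  exact ⟨⟨e y, by rw [← map_mul, hy, map_one]⟩, ⟨e r, by rw [← map_mul, hr]⟩⟩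

lemma isSU_prod {R S : Type*} [CommRing R] [CommRing S] {x : R × S} :
    IsSU x ↔ IsSU x.1 ∧ IsSU x.2 := by
  constructor
  · rintro ⟨⟨y, hy⟩, ⟨r, hr⟩⟩
    exact ⟨⟨⟨y.1, congrArg Prod.fst hy⟩, ⟨r.1, congrArg Prod.fst hr⟩⟩,
           ⟨⟨y.2, congrArg Prod.snd hy⟩, ⟨r.2, congrArg Prod.snd hr⟩⟩⟩
  · rintro ⟨⟨⟨y1, hy1⟩, ⟨r1, hr1⟩⟩, ⟨⟨y2, hy2⟩, ⟨r2, hr2⟩⟩⟩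
    exact ⟨⟨(y1, y2), Prod.ext hy1 hy2⟩, ⟨(r1, r2), Prod.ext hr1 hr2⟩⟩

/-- the finset of square units of `ZMod V` -/
noncomputable def Qf (V : ℕ) [NeZero V] : Finset (ZMod V) :=
  @Finset.filter _ (fun x => IsSU x) (Classical.decPred _) Finset.univ

lemma mem_Qf {V : ℕ} [NeZero V] {x : ZMod V} : x ∈ Qf V ↔ IsSU x := by
  simp [Qf]

lemma Qf_card_pos {V : ℕ} [NeZero V] : 0 < (Qf V).card :=
  Finset.card_pos.mpr ⟨1, mem_Qf.mpr isSU_one⟩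

lemma qf24' : ∀ x : ZMod 24, ((∃ y, x * y = 1) ∧ (∃ r, x = r * r)) → x = 1 := by decide

lemma qf24 : ∀ x : ZMod 24, IsSU x → x = 1 := fun x h => qf24' x h

/-- counting: product formula for Qf through CRT -/
lemma Qf_card_mul (m n : ℕ) [NeZero m] [NeZero n] (h : m.Coprime n) :
    haveI : NeZero (m * n) := ⟨mul_ne_zero (NeZero.ne m) (NeZero.ne n)⟩
    (Qf (m * n)).card = (Qf m).card * (Qf n).card := by
  haveI : NeZero (m * n) := ⟨mul_ne_zero (NeZero.ne m) (NeZero.ne n)⟩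
  set φ := ZMod.chineseRemainder h with hφ
  have himg : (Qf (m * n)).image φ = (Qf m) ×ˢ (Qf n) := by
    ext z
    simp only [Finset.mem_image, Finset.mem_product, mem_Qf]
    constructor
    · rintro ⟨x, hx, rfl⟩
      exact isSU_prod.mp (isSU_map φ hx) |>.imp id id
    · rintro ⟨h1, h2⟩
      refine ⟨φ.symm z, ?_, φ.apply_symm_apply z⟩
      have : IsSU z := isSU_prod.mpr ⟨h1, h2⟩
      simpa using isSU_map φ.symm this
  have hinj : Function.Injective φ := φ.injective
  calc (Qf (m * n)).card = ((Qf (m * n)).image φ).card :=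
        (Finset.card_image_of_injective _ hinj).symm
    _ = ((Qf m) ×ˢ (Qf n)).card := by rw [himg]
    _ = (Qf m).card * (Qf n).card := Finset.card_product _ _

/-- lower bound: p ≤ 2|Qf p| + 1 for odd prime p -/
lemma Qf_p_lower {p : ℕ} (hp : p.Prime) (h2 : 2 < p) :
    haveI : NeZero p := ⟨hp.pos.ne'⟩
    p ≤ 2 * (Qf p).card + 1 := by
  haveI : NeZero p := ⟨hp.pos.ne'⟩
  haveI : Fact p.Prime := ⟨hp⟩
  set N : Finset (ZMod p) := Finset.univ.erase 0 with hN
  have hNcard : N.card = p - 1 := by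
    rw [hN, Finset.card_erase_of_mem (Finset.mem_univ _), Finset.card_univ, ZMod.card]
  set f : ZMod p → ZMod p := fun y => y * y with hf
  have hmaps : ∀ y ∈ N, f y ∈ N.image f := fun y hy => Finset.mem_image_of_mem f hy
  have hcount := Finset.card_eq_sum_card_fiberwise hmaps
  have hfib : ∀ b ∈ N.image f, (N.filter (fun y => f y = b)).card ≤ 2 := by
    intro b hb
    obtain ⟨y0, hy0, rfl⟩ := Finset.mem_image.mp hb
    have hsub : N.filter (fun y => f y = f y0) ⊆ {y0, -y0} := by
      intro y hy
      obtain ⟨hyN, hyf⟩ := Finset.mem_filter.mp hy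
      have : (y - y0) * (y + y0) = 0 := by
        have hyf' : y * y = y0 * y0 := hyf
        linear_combination hyf'
      rcases mul_eq_zero.mp this with h | h
      · simp [Finset.mem_insert, sub_eq_zero.mp h]
      · have : y = -y0 := eq_neg_of_add_eq_zero_left h
        simp [Finset.mem_insert, this]
    calc (N.filter (fun y => f y = f y0)).card ≤ ({y0, -y0} : Finset (ZMod p)).card :=
          Finset.card_le_card hsub
      _ ≤ 2 := Finset.card_insert_le _ _ |>.trans (by simp)
  have himgsub : N.image f ⊆ Qf p := by
    intro b hb
    obtain ⟨y, hy, rfl⟩ := Finset.mem_image.mp hb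
    have hy0 : y ≠ 0 := by simpa [hN] using (Finset.mem_erase.mp hy).1
    refine mem_Qf.mpr ⟨⟨y⁻¹ * y⁻¹, ?_⟩, ⟨y, rfl⟩⟩
    field_simp
    show y * y = y ^ 2; ring
  have h1 : p - 1 ≤ 2 * (N.image f).card := by
    rw [← hNcard, hcount]
    calc ∑ b ∈ N.image f, (N.filter (fun y => f y = b)).card
        ≤ ∑ _b ∈ N.image f, 2 := Finset.sum_le_sum hfib
      _ = 2 * (N.image f).card := by rw [Finset.sum_const, smul_eq_mul, mul_comm]
  have h2' : (N.image f).card ≤ (Qf p).card := Finset.card_le_card himgsub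
  omega

/-- double counting of level sets -/
lemma level_sum {p : ℕ} [NeZero p] (a : ZMod p → ℕ) (K : ℕ) (ha : ∀ r, a r ≤ K) :
    ∑ τ ∈ Finset.Icc 1 K, (Finset.univ.filter (fun r : ZMod p => τ ≤ a r)).card
      = ∑ r : ZMod p, a r := by
  have : ∀ τ, (Finset.univ.filter (fun r : ZMod p => τ ≤ a r)).card
      = ∑ r : ZMod p, if τ ≤ a r then 1 else 0 := fun τ => Finset.card_filter _ _
  simp_rw [this]
  rw [Finset.sum_comm]
  refine Finset.sum_congr rfl (fun r _ => ?_)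
  have : (Finset.Icc 1 K).filter (fun τ => τ ≤ a r) = Finset.Icc 1 (a r) := by
    ext τ
    simp only [Finset.mem_filter, Finset.mem_Icc]
    have := ha r; omega
  calc ∑ τ ∈ Finset.Icc 1 K, (if τ ≤ a r then 1 else 0)
      = ((Finset.Icc 1 K).filter (fun τ => τ ≤ a r)).card := (Finset.card_filter _ _).symm
    _ = (Finset.Icc 1 (a r)).card := by rw [this]
    _ = a r := by rw [Nat.card_Icc]; omega

/-- reflection reindex -/
lemma sum_reflect (g : ℕ → ℕ) (K : ℕ) :
    ∑ τ ∈ Finset.Icc 1 K, g (K + 1 - τ) = ∑ τ ∈ Finset.Icc 1 K, g τ := by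
  refine Finset.sum_nbij' (fun τ => K + 1 - τ) (fun τ => K + 1 - τ) ?_ ?_ ?_ ?_ ?_ <;>
    intro a ha <;> simp only [Finset.mem_Icc] at * <;> omega

lemma add_nonempty {p : ℕ} {s t : Finset (ZMod p)} (hs : s.Nonempty) (ht : t.Nonempty) :
    (s + t).Nonempty := by
  obtain ⟨a, ha⟩ := hs; obtain ⟨b, hb⟩ := ht
  exact ⟨a + b, Finset.add_mem_add ha hb⟩

lemma cd_step {p : ℕ} (hp : p.Prime) {s t : Finset (ZMod p)} (hs : s.Nonempty) (ht : t.Nonempty)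
    {m : ℕ} (hm : min p m ≤ s.card) : min p (m + t.card - 1) ≤ (s + t).card := by
  have h := ZMod.cauchy_davenport hp hs ht
  have h1 : 1 ≤ t.card := Finset.card_pos.mpr ht
  have h2 : 1 ≤ s.card := Finset.card_pos.mpr hs
  rcases min_cases p m with ⟨heq, hle⟩ | ⟨heq, hlt⟩
  · -- min = p, so s.card ≥ p
    have : min p (s.card + t.card - 1) = p := by
      rw [heq] at hm; apply min_eq_left; omega
    rw [this] at h
    exact le_trans (by apply min_le_of_left_le; omega) h
  · rw [heq] at hm
    calc min p (m + t.card - 1) ≤ min p (s.card + t.card - 1) := by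
          apply le_min (min_le_left _ _)
          apply le_trans (min_le_right _ _); omega
      _ ≤ (s + t).card := h

lemma cd8 {p : ℕ} (hp : p.Prime) (S0 S1 S2 S3 S4 S5 S6 S7 : Finset (ZMod p))
    (h0 : S0.Nonempty) (h1 : S1.Nonempty) (h2 : S2.Nonempty) (h3 : S3.Nonempty)
    (h4 : S4.Nonempty) (h5 : S5.Nonempty) (h6 : S6.Nonempty) (h7 : S7.Nonempty)
    (hc : p + 7 ≤ S0.card + S1.card + S2.card + S3.card + S4.card + S5.card + S6.card + S7.card)
    (c : ZMod p) :
    ∃ x0 ∈ S0, ∃ x1 ∈ S1, ∃ x2 ∈ S2, ∃ x3 ∈ S3, ∃ x4 ∈ S4, ∃ x5 ∈ S5, ∃ x6 ∈ S6, ∃ x7 ∈ S7,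
      x0 + x1 + x2 + x3 + x4 + x5 + x6 + x7 = c := by
  haveI : NeZero p := ⟨hp.pos.ne'⟩
  have e01 : min p (S0.card + S1.card - 1) ≤ (S0 + S1).card :=
    cd_step hp h0 h1 (m := S0.card) (by apply min_le_of_right_le; omega)
  have n01 := add_nonempty h0 h1
  have e012 := cd_step hp n01 h2 e01
  have n012 := add_nonempty n01 h2
  have e0123 := cd_step hp n012 h3 e012
  have n0123 := add_nonempty n012 h3
  have e01234 := cd_step hp n0123 h4 e0123
  have n01234 := add_nonempty n0123 h4
  have e012345 := cd_step hp n01234 h5 e01234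
  have n012345 := add_nonempty n01234 h5
  have e0123456 := cd_step hp n012345 h6 e012345
  have n0123456 := add_nonempty n012345 h6
  have efin := cd_step hp n0123456 h7 e0123456
  set T := S0 + S1 + S2 + S3 + S4 + S5 + S6 + S7 with hT
  have hTcard : p ≤ T.card := by
    have : min p (S0.card + S1.card - 1 + S2.card - 1 + S3.card - 1 + S4.card - 1 + S5.card - 1
        + S6.card - 1 + S7.card - 1) = p := by
      apply min_eq_left
      have c0 : 1 ≤ S0.card := Finset.card_pos.mpr h0
      have c1 : 1 ≤ S1.card := Finset.card_pos.mpr h1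
      have c2 : 1 ≤ S2.card := Finset.card_pos.mpr h2
      have c3 : 1 ≤ S3.card := Finset.card_pos.mpr h3
      have c4 : 1 ≤ S4.card := Finset.card_pos.mpr h4
      have c5 : 1 ≤ S5.card := Finset.card_pos.mpr h5
      have c6 : 1 ≤ S6.card := Finset.card_pos.mpr h6
      have c7 : 1 ≤ S7.card := Finset.card_pos.mpr h7
      omega
    rw [this] at efin
    exact efin
  have hTuniv : T = Finset.univ := by
    apply Finset.eq_univ_of_card
    have hle : T.card ≤ Fintype.card (ZMod p) := Finset.card_le_univ T
    rw [ZMod.card] at *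
    omega
  have hcT : c ∈ T := hTuniv ▸ Finset.mem_univ c
  rw [hT] at hcT
  obtain ⟨y, hy, x7, hx7, rfl⟩ := Finset.mem_add.mp hcT
  obtain ⟨y6, hy6, x6, hx6, rfl⟩ := Finset.mem_add.mp hy
  obtain ⟨y5, hy5, x5, hx5, rfl⟩ := Finset.mem_add.mp hy6
  obtain ⟨y4, hy4, x4, hx4, rfl⟩ := Finset.mem_add.mp hy5
  obtain ⟨y3, hy3, x3, hx3, rfl⟩ := Finset.mem_add.mp hy4
  obtain ⟨y2, hy2, x2, hx2, rfl⟩ := Finset.mem_add.mp hy3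
  obtain ⟨x0, hx0, x1, hx1, rfl⟩ := Finset.mem_add.mp hy2
  exact ⟨x0, hx0, x1, hx1, x2, hx2, x3, hx3, x4, hx4, x5, hx5, x6, hx6, x7, hx7, rfl⟩

section Slice

variable {V₀ p : ℕ} [NeZero V₀] [NeZero p]

/-- fiber of a set over the p-component, through the CRT iso -/
noncomputable def fib (hcop : Nat.Coprime V₀ p) (A : Finset (ZMod (V₀ * p))) (r : ZMod p) :
    Finset (ZMod V₀) :=
  (A.filter (fun x => (ZMod.chineseRemainder hcop x).2 = r)).image
    (fun x => (ZMod.chineseRemainder hcop x).1)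

lemma fib_card (hcop : Nat.Coprime V₀ p) (A : Finset (ZMod (V₀ * p))) (r : ZMod p) :
    (fib hcop A r).card = (A.filter (fun x => (ZMod.chineseRemainder hcop x).2 = r)).card := by
  apply Finset.card_image_of_injOn
  intro x hx y hy hxy
  simp only [Finset.mem_coe, Finset.mem_filter] at hx hy
  apply (ZMod.chineseRemainder hcop).injective
  exact Prod.ext hxy (hx.2.trans hy.2.symm)

lemma fib_mass (hcop : Nat.Coprime V₀ p) (A : Finset (ZMod (V₀ * p))) :
    ∑ r : ZMod p, (fib hcop A r).card = A.card := by
  simp_rw [fib_card]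
  exact (Finset.card_eq_sum_card_fiberwise (fun x _ => Finset.mem_univ
    ((ZMod.chineseRemainder hcop x).2))).symm

lemma fib_su (hcop : Nat.Coprime V₀ p) (A : Finset (ZMod (V₀ * p)))
    (hA : ∀ x ∈ A, IsSU x) (r : ZMod p) : ∀ α ∈ fib hcop A r, IsSU α := by
  intro α hα
  obtain ⟨x, hx, rfl⟩ := Finset.mem_image.mp hα
  exact (isSU_prod.mp (isSU_map _ (hA x (Finset.mem_filter.mp hx).1))).1

lemma fib_card_le (hcop : Nat.Coprime V₀ p) (A : Finset (ZMod (V₀ * p)))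
    (hA : ∀ x ∈ A, IsSU x) (r : ZMod p) : (fib hcop A r).card ≤ (Qf V₀).card := by
  apply Finset.card_le_card
  intro α hα
  exact mem_Qf.mpr (fib_su hcop A hA r α hα)

lemma fib_snd_su (hcop : Nat.Coprime V₀ p) (A : Finset (ZMod (V₀ * p)))
    (hA : ∀ x ∈ A, IsSU x) (r : ZMod p) (hr : (fib hcop A r).Nonempty) : IsSU r := by
  obtain ⟨α, hα⟩ := hr
  obtain ⟨x, hx, -⟩ := Finset.mem_image.mp hα
  obtain ⟨hxA, hx2⟩ := Finset.mem_filter.mp hx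
  have := (isSU_prod.mp (isSU_map (ZMod.chineseRemainder hcop) (hA x hxA))).2
  rwa [hx2] at this

lemma sliceQ (hp : p.Prime) (hcop : Nat.Coprime V₀ p)
    (A B : Finset (ZMod (V₀ * p)))
    (hA : ∀ x ∈ A, IsSU x) (hB : ∀ x ∈ B, IsSU x)
    (hcard : haveI : NeZero (V₀ * p) := ⟨mul_ne_zero (NeZero.ne V₀) (NeZero.ne p)⟩
      (Qf (V₀ * p)).card < A.card + B.card) :
    ∃ LA LB : Finset (ZMod p), LA.Nonempty ∧ LB.Nonempty ∧
      (Qf p).card + 1 ≤ LA.card + LB.card ∧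
      ∀ r ∈ LA, ∀ s ∈ LB,
        (∀ x ∈ fib hcop A r, IsSU x) ∧ (∀ x ∈ fib hcop B s, IsSU x) ∧
        (fib hcop A r).Nonempty ∧ (fib hcop B s).Nonempty ∧
        (Qf V₀).card < (fib hcop A r).card + (fib hcop B s).card := by
  haveI : NeZero (V₀ * p) := ⟨mul_ne_zero (NeZero.ne V₀) (NeZero.ne p)⟩
  set K := (Qf V₀).card with hK
  set q := (Qf p).card with hq
  have hK1 : 1 ≤ K := Qf_card_pos
  set a : ZMod p → ℕ := fun r => (fib hcop A r).card with ha
  set b : ZMod p → ℕ := fun r => (fib hcop B r).card with hb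
  -- pigeonhole for τ
  have hpigeon : ∃ τ ∈ Finset.Icc 1 K,
      q + 1 ≤ (Finset.univ.filter (fun r : ZMod p => τ ≤ a r)).card
        + (Finset.univ.filter (fun r : ZMod p => K + 1 - τ ≤ b r)).card := by
    by_contra hcon
    push_neg at hcon
    have hsum : ∑ τ ∈ Finset.Icc 1 K,
        ((Finset.univ.filter (fun r : ZMod p => τ ≤ a r)).card
          + (Finset.univ.filter (fun r : ZMod p => K + 1 - τ ≤ b r)).card) ≤ K * q := by
      calc _ ≤ ∑ _τ ∈ Finset.Icc 1 K, q := Finset.sum_le_sum (fun τ hτ => by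
              have := hcon τ hτ; omega)
        _ = K * q := by
              rw [Finset.sum_const, Nat.card_Icc, smul_eq_mul]
              congr 1
    rw [Finset.sum_add_distrib] at hsum
    have hA' : ∑ τ ∈ Finset.Icc 1 K,
        (Finset.univ.filter (fun r : ZMod p => τ ≤ a r)).card = A.card := by
      rw [level_sum a K (fun r => fib_card_le hcop A hA r)]
      exact fib_mass hcop A
    have hB' : ∑ τ ∈ Finset.Icc 1 K,
        (Finset.univ.filter (fun r : ZMod p => K + 1 - τ ≤ b r)).card = B.card := by
      rw [sum_reflect (fun σ => (Finset.univ.filter (fun r : ZMod p => σ ≤ b r)).card) K]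
      rw [level_sum b K (fun r => fib_card_le hcop B hB r)]
      exact fib_mass hcop B
    rw [hA', hB'] at hsum
    have hQ : (Qf (V₀ * p)).card = K * q := Qf_card_mul V₀ p hcop
    omega
  obtain ⟨τ, hτmem, hτ⟩ := hpigeon
  obtain ⟨hτ1, hτK⟩ := Finset.mem_Icc.mp hτmem
  refine ⟨Finset.univ.filter (fun r : ZMod p => τ ≤ a r),
    Finset.univ.filter (fun r : ZMod p => K + 1 - τ ≤ b r), ?_, ?_, hτ, ?_⟩
  · -- LA nonempty: LB ⊆ Qf p so |LB| ≤ q, hence |LA| ≥ 1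
    rw [← Finset.card_pos]
    have hLBsub : (Finset.univ.filter (fun r : ZMod p => K + 1 - τ ≤ b r)) ⊆ Qf p := by
      intro r hr
      have hbr : 1 ≤ b r := by have := (Finset.mem_filter.mp hr).2; omega
      exact mem_Qf.mpr (fib_snd_su hcop B hB r (Finset.card_pos.mp hbr))
    have := Finset.card_le_card hLBsub
    omega
  · rw [← Finset.card_pos]
    have hLAsub : (Finset.univ.filter (fun r : ZMod p => τ ≤ a r)) ⊆ Qf p := by
      intro r hr
      have har : 1 ≤ a r := by have := (Finset.mem_filter.mp hr).2; omega
      exact mem_Qf.mpr (fib_snd_su hcop A hA r (Finset.card_pos.mp har))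
    have := Finset.card_le_card hLAsub
    omega
  · intro r hr s hs
    have har : τ ≤ (fib hcop A r).card := (Finset.mem_filter.mp hr).2
    have hbs : K + 1 - τ ≤ (fib hcop B s).card := (Finset.mem_filter.mp hs).2
    refine ⟨fib_su hcop A hA r, fib_su hcop B hB s, ?_, ?_, ?_⟩
    · rw [← Finset.card_pos]; omega
    · rw [← Finset.card_pos]; omega
    · omega

end Slice

theorem key (P : Finset ℕ) :
    (∀ q ∈ P, q.Prime ∧ 3 < q) →
    ∀ (V : ℕ) [NeZero V], V = 24 * ∏ q ∈ P, q →
    ∀ (A B : Fin 4 → Finset (ZMod V)),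
    (∀ j, ∀ x ∈ A j, IsSU x) → (∀ j, ∀ x ∈ B j, IsSU x) →
    (∀ j, (A j).Nonempty) → (∀ j, (B j).Nonempty) →
    (∀ j, (Qf V).card < (A j).card + (B j).card) →
    ∀ n : ℤ, n % 24 = 8 →
    ∃ a b : Fin 4 → ZMod V, (∀ j, a j ∈ A j) ∧ (∀ j, b j ∈ B j) ∧
      ((n : ZMod V) = ∑ j, (a j + b j)) := by
  induction P using Finset.induction_on with
  | empty =>
    intro _ V _ hV A B hAsu hBsu hAne hBne _ n hn
    rw [Finset.prod_empty, mul_one] at hV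
    subst hV
    choose a ha using hAne
    choose b hb using hBne
    refine ⟨fun j => a j, fun j => b j, fun j => ha j, fun j => hb j, ?_⟩
    have hone : ∀ j, a j = 1 := fun j => qf24 _ (hAsu j _ (ha j))
    have hone' : ∀ j, b j = 1 := fun j => qf24 _ (hBsu j _ (hb j))
    simp_rw [hone, hone']
    have : ((n : ℤ) : ZMod 24) = ((8 : ℤ) : ZMod 24) := by
      rw [ZMod.intCast_eq_intCast_iff]
      show n % (24:ℕ) = 8 % (24:ℕ)
      push_cast
      omega
    rw [this]
    rw [Fin.sum_univ_four]
    norm_num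
  | @insert p P hpP ih =>
    intro hP V _ hV A B hAsu hBsu hAne hBne hcard n hn
    have hp := hP p (Finset.mem_insert_self p P)
    have hP' : ∀ q ∈ P, q.Prime ∧ 3 < q := fun q hq => hP q (Finset.mem_insert_of_mem hq)
    have hV₀pos : 0 < 24 * ∏ q ∈ P, q := by
      have : 0 < ∏ q ∈ P, q := Finset.prod_pos (fun q hq => (hP' q hq).1.pos)
      omega
    set V₀ := 24 * ∏ q ∈ P, q with hV₀
    haveI : NeZero V₀ := ⟨hV₀pos.ne'⟩
    haveI : NeZero p := ⟨hp.1.pos.ne'⟩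
    have hVeq : V = V₀ * p := by rw [hV, Finset.prod_insert hpP, hV₀]; ring
    subst hVeq
    have hcop : Nat.Coprime V₀ p := by
      have hnd : ¬ p ∣ V₀ := by
        rw [hV₀]
        intro hdvd
        rcases (Nat.Prime.dvd_mul hp.1).mp hdvd with h24 | hprod
        · have h83 : p ∣ 2^3 * 3 := by norm_num; exact h24
          rcases (Nat.Prime.dvd_mul hp.1).mp h83 with h8 | h3
          · have h2 : p ∣ 2 := Nat.Prime.dvd_of_dvd_pow hp.1 h8
            have := Nat.le_of_dvd (by norm_num) h2; omega
          · have := Nat.le_of_dvd (by norm_num) h3; omega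
        · obtain ⟨q, hq, hpq⟩ := (Prime.dvd_finset_prod_iff hp.1.prime _).mp hprod
          have heq : p = q := (Nat.prime_dvd_prime_iff_eq hp.1 (hP' q hq).1).mp hpq
          exact hpP (heq ▸ hq)
      exact Nat.Coprime.symm ((Nat.Prime.coprime_iff_not_dvd hp.1).mpr hnd)
    -- slice each pair
    choose LA LB hLAne hLBne hLsum hfibs using
      fun j => sliceQ hp.1 hcop (A j) (B j) (hAsu j) (hBsu j) (hcard j)
    -- Cauchy-Davenport over ZMod p
    have hqp : p ≤ 2 * (Qf p).card + 1 := Qf_p_lower hp.1 (by omega)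
    have hctot : p + 7 ≤ (LA 0).card + (LB 0).card + (LA 1).card + (LB 1).card
        + (LA 2).card + (LB 2).card + (LA 3).card + (LB 3).card := by
      have h0 := hLsum 0; have h1 := hLsum 1; have h2 := hLsum 2; have h3 := hLsum 3
      omega
    obtain ⟨r0, hr0, s0, hs0, r1, hr1, s1, hs1, r2, hr2, s2, hs2, r3, hr3, s3, hs3, hsum⟩ :=
      cd8 hp.1 (LA 0) (LB 0) (LA 1) (LB 1) (LA 2) (LB 2) (LA 3) (LB 3)
        (hLAne 0) (hLBne 0) (hLAne 1) (hLBne 1) (hLAne 2) (hLBne 2) (hLAne 3) (hLBne 3)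
        hctot ((n : ℤ) : ZMod p)
    set r : Fin 4 → ZMod p := ![r0, r1, r2, r3] with hrdef
    set s : Fin 4 → ZMod p := ![s0, s1, s2, s3] with hsdef
    have hrmem : ∀ j, r j ∈ LA j := by
      intro j
      fin_cases j
      · exact hr0
      · exact hr1
      · exact hr2
      · exact hr3
    have hsmem : ∀ j, s j ∈ LB j := by
      intro j
      fin_cases j
      · exact hs0
      · exact hs1
      · exact hs2
      · exact hs3
    have hfibprops := fun j => hfibs j (r j) (hrmem j) (s j) (hsmem j)
    set FA : Fin 4 → Finset (ZMod V₀) := fun j => fib hcop (A j) (r j) with hFA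
    set FB : Fin 4 → Finset (ZMod V₀) := fun j => fib hcop (B j) (s j) with hFB
    obtain ⟨α, β, hα, hβ, hIH⟩ := ih hP' V₀ rfl FA FB
      (fun j => (hfibprops j).1) (fun j => (hfibprops j).2.1)
      (fun j => (hfibprops j).2.2.1) (fun j => (hfibprops j).2.2.2.1)
      (fun j => (hfibprops j).2.2.2.2) n hn
    -- lift back through CRT
    have hlift : ∀ j, ∃ x ∈ A j, ZMod.chineseRemainder hcop x = (α j, r j) := by
      intro j
      have hm : α j ∈ fib hcop (A j) (r j) := hα j
      obtain ⟨x, hxf, hx1⟩ := Finset.mem_image.mp hm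
      obtain ⟨hxA, hx2⟩ := Finset.mem_filter.mp hxf
      exact ⟨x, hxA, Prod.ext hx1 hx2⟩
    have hlift' : ∀ j, ∃ x ∈ B j, ZMod.chineseRemainder hcop x = (β j, s j) := by
      intro j
      have hm : β j ∈ fib hcop (B j) (s j) := hβ j
      obtain ⟨x, hxf, hx1⟩ := Finset.mem_image.mp hm
      obtain ⟨hxB, hx2⟩ := Finset.mem_filter.mp hxf
      exact ⟨x, hxB, Prod.ext hx1 hx2⟩
    choose xa hxaA hφa using hlift
    choose xb hxbB hφb using hlift'
    refine ⟨xa, xb, hxaA, hxbB, ?_⟩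
    apply (ZMod.chineseRemainder hcop).injective
    rw [map_intCast, map_sum]
    simp_rw [map_add, hφa, hφb]
    refine Prod.ext ?_ ?_
    · rw [Prod.fst_intCast]
      rw [Prod.fst_sum]
      simp only [Prod.fst_add]
      exact hIH
    · rw [Prod.snd_intCast]
      rw [Prod.snd_sum]
      simp only [Prod.snd_add]
      rw [Fin.sum_univ_four]
      show ((n : ℤ) : ZMod p) = _
      rw [← hsum]
      show r0 + s0 + r1 + s1 + r2 + s2 + r3 + s3 = _
      have e0 : r 0 = r0 := rfl
      have e1 : r 1 = r1 := rfl
      have e2 : r 2 = r2 := rfl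
      have e3 : r 3 = r3 := rfl
      have f0 : s 0 = s0 := rfl
      have f1 : s 1 = s1 := rfl
      have f2 : s 2 = s2 := rfl
      have f3 : s 3 = s3 := rfl
      rw [e0, e1, e2, e3, f0, f1, f2, f3]
      ring

open Classical in
noncomputable def redQR (W : ℕ) : Finset ℕ :=
  (Finset.Icc 1 W).filter (fun b => Nat.gcd b W = 1 ∧ ∃ h : ℕ, h ^ 2 % W = b % W)

theorem eight_fold_sumset_covers (w : ℕ) (hw : 4 ≤ w)
    (W : ℕ) (hW : W = 8 * ∏ p ∈ (Finset.range w).filter (fun p => p.Prime ∧ 2 < p), p)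
    (E : Finset ℕ) (hE : E ⊆ redQR W) (hcard : (redQR W).card < 2 * E.card)
    (n : ℤ) (hn : n ≡ 8 [ZMOD 24]) :
    ∃ b : Fin 8 → ℕ, (∀ i, b i ∈ E) ∧ n ≡ (∑ i, (b i : ℤ)) [ZMOD (W : ℤ)] := by
  classical
  set P : Finset ℕ := (Finset.range w).filter (fun p => p.Prime ∧ 3 < p) with hP
  have hPfacts : ∀ q ∈ P, q.Prime ∧ 3 < q := by
    intro q hq
    have := Finset.mem_filter.mp hq
    exact this.2
  have hfilt : (Finset.range w).filter (fun p => p.Prime ∧ 2 < p) = insert 3 P := by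
    ext q
    simp only [Finset.mem_filter, Finset.mem_insert, Finset.mem_range, hP]
    constructor
    · rintro ⟨hqw, hqp, hq2⟩
      by_cases h3 : q = 3
      · left; exact h3
      · right
        exact ⟨hqw, hqp, by omega⟩
    · rintro (rfl | ⟨hqw, hqp, hq3⟩)
      · exact ⟨by omega, by norm_num, by norm_num⟩
      · exact ⟨hqw, hqp, by omega⟩
  have h3notP : 3 ∉ P := by
    simp [hP]
  have hW24 : W = 24 * ∏ q ∈ P, q := by
    rw [hW, hfilt, Finset.prod_insert h3notP]
    ring
  have hWpos : 0 < W := by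
    rw [hW24]
    have : 0 < ∏ q ∈ P, q := Finset.prod_pos (fun q hq => (hPfacts q hq).1.pos)
    omega
  haveI : NeZero W := ⟨hWpos.ne'⟩
  have hW1 : 1 < W := by
    rw [hW24]
    have : 0 < ∏ q ∈ P, q := Finset.prod_pos (fun q hq => (hPfacts q hq).1.pos)
    omega
  haveI : Fact (1 < W) := ⟨hW1⟩
  -- membership facts for redQR
  have hred : ∀ b ∈ redQR W, (1 ≤ b ∧ b ≤ W) ∧ Nat.gcd b W = 1 ∧ ∃ h : ℕ, h ^ 2 % W = b % W := by
    intro b hb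
    obtain ⟨hIcc, h2⟩ := Finset.mem_filter.mp hb
    exact ⟨Finset.mem_Icc.mp hIcc, h2⟩
  have hredlt : ∀ b ∈ redQR W, b < W := by
    intro b hb
    obtain ⟨⟨h1, h2⟩, hgcd, -⟩ := hred b hb
    rcases Nat.lt_or_ge b W with h | h
    · exact h
    · exfalso
      have : b = W := by omega
      rw [this, Nat.gcd_self] at hgcd
      omega
  -- elements of redQR cast to square units
  have hSU : ∀ b ∈ redQR W, IsSU ((b : ℕ) : ZMod W) := by
    intro b hb
    obtain ⟨⟨h1, h2⟩, hgcd, hh, hsq⟩ := hred b hb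
    constructor
    · have hu : IsUnit ((b : ℕ) : ZMod W) := (ZMod.isUnit_iff_coprime b W).mpr hgcd
      obtain ⟨y, hy⟩ := isUnit_iff_exists_inv.mp hu
      exact ⟨y, hy⟩
    · refine ⟨((hh : ℕ) : ZMod W), ?_⟩
      have : ((hh ^ 2 : ℕ) : ZMod W) = ((b : ℕ) : ZMod W) :=
        (ZMod.natCast_eq_natCast_iff _ _ _).mpr hsq
      rw [← this]
      push_cast
      ring
  -- injectivity of cast on redQR
  have hinj : Set.InjOn (fun b : ℕ => ((b : ℕ) : ZMod W)) (redQR W) := by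
    intro b1 hb1 b2 hb2 heq
    have h1 : b1 % W = b2 % W := (ZMod.natCast_eq_natCast_iff _ _ _).mp heq
    have l1 := hredlt b1 hb1
    have l2 := hredlt b2 hb2
    rwa [Nat.mod_eq_of_lt l1, Nat.mod_eq_of_lt l2] at h1
  -- the image of E
  set E' : Finset (ZMod W) := E.image (fun b : ℕ => ((b : ℕ) : ZMod W)) with hE'
  have hE'card : E'.card = E.card :=
    Finset.card_image_of_injOn (Set.InjOn.mono (fun x hx => hE hx) hinj)
  have hE'SU : ∀ x ∈ E', IsSU x := by
    intro x hx
    obtain ⟨b, hb, rfl⟩ := Finset.mem_image.mp hx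
    exact hSU b (hE hb)
  -- |Qf W| ≤ |redQR W| via val
  have hQfle : (Qf W).card ≤ (redQR W).card := by
    apply Finset.card_le_card_of_injOn (fun x => x.val)
    · intro x hx
      obtain ⟨⟨y, hy⟩, ⟨rr, hrr⟩⟩ := mem_Qf.mp hx
      have hu : IsUnit x := IsUnit.of_mul_eq_one _ hy
      have hx0 : x ≠ 0 := by
        intro h0
        rw [h0, zero_mul] at hy
        exact zero_ne_one hy
      have hval0 : x.val ≠ 0 := fun h => hx0 ((ZMod.val_eq_zero x).mp h)
      have hvallt : x.val < W := ZMod.val_lt x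
      refine Finset.mem_filter.mpr ⟨Finset.mem_Icc.mpr ⟨by dsimp only; omega, by dsimp only; omega⟩, ?_, ?_⟩
      · obtain ⟨u, hu'⟩ := hu
        have := ZMod.val_coe_unit_coprime u
        rwa [hu'] at this
      · refine ⟨rr.val, ?_⟩
        have h1 : ((rr.val ^ 2 : ℕ) : ZMod W) = ((x.val : ℕ) : ZMod W) := by
          push_cast
          rw [ZMod.natCast_val, ZMod.natCast_val]
          rw [ZMod.cast_id, ZMod.cast_id]
          rw [hrr]; ring
        exact (ZMod.natCast_eq_natCast_iff _ _ _).mp h1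
    · intro x _ y _ hxy
      exact ZMod.val_injective W hxy
  -- apply key
  have hn' : n % 24 = 8 := by
    have h8 : n % 24 = 8 % 24 := hn
    omega
  have hinv : ∀ _j : Fin 4, (Qf W).card < E'.card + E'.card := by
    intro j
    rw [hE'card]
    omega
  obtain ⟨a, b, ha, hb, hsum⟩ := key P hPfacts W hW24 (fun _ => E') (fun _ => E')
    (fun _ => hE'SU) (fun _ => hE'SU)
    (fun _ => Finset.card_pos.mp (by rw [hE'card]; omega))
    (fun _ => Finset.card_pos.mp (by rw [hE'card]; omega))
    hinv n hn'
  -- choose preimages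
  have hpa : ∀ j, ∃ m ∈ E, ((m : ℕ) : ZMod W) = a j := by
    intro j
    obtain ⟨m, hm, hmeq⟩ := Finset.mem_image.mp (ha j)
    exact ⟨m, hm, hmeq⟩
  have hpb : ∀ j, ∃ m ∈ E, ((m : ℕ) : ZMod W) = b j := by
    intro j
    obtain ⟨m, hm, hmeq⟩ := Finset.mem_image.mp (hb j)
    exact ⟨m, hm, hmeq⟩
  choose na hnaE hna2 using hpa
  choose nb hnbE hnb2 using hpb
  refine ⟨Fin.append na nb, ?_, ?_⟩
  · intro i
    refine Fin.addCases (m := 4) (n := 4) ?_ ?_ i <;> intro j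
    · rw [Fin.append_left]; exact hnaE j
    · rw [Fin.append_right]; exact hnbE j
  · rw [← ZMod.intCast_eq_intCast_iff]
    rw [hsum]
    have hsplit : (∑ i : Fin 8, ((Fin.append na nb i : ℕ) : ℤ))
        = (∑ j : Fin 4, ((na j : ℕ) : ℤ)) + ∑ j : Fin 4, ((nb j : ℕ) : ℤ) := by
      have h := Fin.sum_univ_add (f := fun i : Fin (4 + 4) => ((Fin.append na nb i : ℕ) : ℤ))
      simp only [Fin.append_left, Fin.append_right] at h
      exact h
    rw [hsplit]
    push_cast
    simp_rw [hna2, hnb2]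
    rw [← Finset.sum_add_distrib]
end

section
/- Let w ≥ 4 and W = 24 * W' with gcd(W', 24) = 1, where W = 8 * ∏_{2 < p < w, p prime} p. If b, b' are distinct reduced quadratic residues modulo W, then W' does not divide b − b'. -/
lemma qr_mod24 (W b : ℕ) (h24 : 24 ∣ W) (hbW : Nat.gcd b W = 1)
    (h : ℕ) (hh : h ^ 2 % W = b % W) : b % 24 = 1 := by
  have hg2 : Nat.Coprime (h ^ 2) W := by
    have : Nat.gcd W (h ^ 2) = Nat.gcd (h ^ 2 % W) W := Nat.gcd_rec W (h ^ 2)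
    have : Nat.gcd W (h ^ 2) = Nat.gcd (b % W) W := by rw [this, hh]
    have : Nat.gcd W (h ^ 2) = Nat.gcd W b := by rw [this, ← Nat.gcd_rec]
    unfold Nat.Coprime
    rw [Nat.gcd_comm, this, Nat.gcd_comm, hbW]
  have hg : Nat.Coprime h W := by
    have := (Nat.coprime_pow_left_iff (by norm_num : 0 < 2) h W).mp hg2
    exact this
  have hg24 : Nat.gcd h 24 = 1 := Nat.Coprime.coprime_dvd_right h24 hg
  have hr : Nat.gcd (h % 24) 24 = 1 := by
    rwa [Nat.gcd_comm, Nat.gcd_rec] at hg24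
  have key : ∀ r, r < 24 → Nat.gcd r 24 = 1 → r ^ 2 % 24 = 1 := by decide
  have hsq : h ^ 2 % 24 = 1 := by
    rw [Nat.pow_mod]
    exact key (h % 24) (Nat.mod_lt _ (by norm_num)) hr
  calc b % 24 = b % W % 24 := (Nat.mod_mod_of_dvd b h24).symm
    _ = h ^ 2 % W % 24 := by rw [hh]
    _ = h ^ 2 % 24 := Nat.mod_mod_of_dvd _ h24
    _ = 1 := hsq

theorem redQR_injective_mod_W' (w W W' : ℕ) (hw : 4 ≤ w)
    (hW : W = 8 * ∏ p ∈ (Finset.range w).filter (fun p => p.Prime ∧ 2 < p), p)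
    (hW24 : W = 24 * W') (hgcd : Nat.gcd W' 24 = 1)
    (b b' : ℕ) (hb : b ∈ redQR W) (hb' : b' ∈ redQR W) (hne : b ≠ b') :
    ¬ ((W' : ℤ) ∣ (b : ℤ) - (b' : ℤ)) := by
  intro hdvd
  simp only [redQR, Finset.mem_filter, Finset.mem_Icc] at hb hb'
  obtain ⟨⟨hb1, hb2⟩, hbg, h, hhb⟩ := hb
  obtain ⟨⟨hb'1, hb'2⟩, hb'g, h', hhb'⟩ := hb'
  have h24 : (24 : ℕ) ∣ W := ⟨W', hW24⟩
  have m1 : b % 24 = 1 := qr_mod24 W b h24 hbg h hhb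
  have m2 : b' % 24 = 1 := qr_mod24 W b' h24 hb'g h' hhb'
  have h24dvd : (24 : ℤ) ∣ (b : ℤ) - (b' : ℤ) := by
    have : Nat.ModEq 24 b b' := by unfold Nat.ModEq; rw [m1, m2]
    exact_mod_cast this.symm.dvd
  have hcop : IsCoprime (W' : ℤ) (24 : ℤ) := by
    have := Nat.isCoprime_iff_coprime.mpr hgcd
    exact_mod_cast this
  have hWdvd : (W : ℤ) ∣ (b : ℤ) - (b' : ℤ) := by
    have := hcop.mul_dvd hdvd h24dvd
    have hWe : (W : ℤ) = (W' : ℤ) * 24 := by push_cast [hW24]; ring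
    rwa [hWe]
  have hzero : (b : ℤ) - (b' : ℤ) = 0 := by
    refine Int.eq_zero_of_abs_lt_dvd hWdvd ?_
    rcases abs_cases ((b : ℤ) - (b' : ℤ)) with ⟨he, _⟩ | ⟨he, _⟩ <;>
      · rw [he]
        push_cast
        omega
  have : b = b' := by omega
  exact hne this
end

section
/- Let W, q, a, b be positive integers with gcd(a, q) = 1, and let h be coprime to W. Let t = gcd(q, W). If the sum over l ∈ [q] with gcd(Wl + h, q) = 1 of e((W l^2 + 2 h l) a / q) is decomposed by the residue of Wl + h mod q, then for each l* ∈ [q] coprime to q with t | (l* − h), the congruence W l + h ≡ l* (mod q) has exactly t solutions l ∈ [q], and the corresponding partial sum equals e((W z^2 + 2 h z) a / q) · Σ_{y ∈ [t]} e(2 h a y / t) for any fixed solution z. In particular, if t does not divide 2, this partial sum vanishes, and hence the whole sum vanishes. -/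
/-- `e x = exp(2πi x)`. -/
noncomputable def e (x : ℝ) : ℂ := Complex.exp (2 * Real.pi * Complex.I * x)

open Finset

lemma e_add (x y : ℝ) : e (x + y) = e x * e y := by
  simp [e, mul_add, Complex.exp_add]

lemma e_int (n : ℤ) : e n = 1 := by
  have h : (2 * Real.pi * Complex.I * ((n : ℝ) : ℂ)) = (n : ℤ) * (2 * Real.pi * Complex.I) := by
    push_cast; ring
  rw [e, h, Complex.exp_int_mul_two_pi_mul_I]

lemma e_div_congr {q : ℕ} (hq : 0 < q) {m n : ℤ} (h : (q : ℤ) ∣ m - n) :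
    e ((m : ℝ) / q) = e ((n : ℝ) / q) := by
  obtain ⟨k, hk⟩ := h
  have hm : m = n + q * k := by linarith
  have hq' : (q : ℝ) ≠ 0 := by positivity
  have : (m : ℝ) / q = (n : ℝ) / q + (k : ℤ) := by
    rw [hm]; push_cast; field_simp
  rw [this, e_add, e_int, mul_one]

lemma sum_range_e_eq_zero {t c : ℕ} (ht : 0 < t) (h : ¬ t ∣ c) :
    ∑ y ∈ range t, e (((c * y : ℕ) : ℝ) / t) = 0 := by
  have ht' : (t : ℝ) ≠ 0 := by positivity
  have hterm : ∀ y : ℕ, e (((c * y : ℕ) : ℝ) / t) = (e ((c : ℝ) / t)) ^ y := by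
    intro y
    rw [e, e, ← Complex.exp_nat_mul]
    congr 1
    push_cast
    ring
  have hpi : (2 * Real.pi * Complex.I : ℂ) ≠ 0 := by
    simp [Real.pi_ne_zero, Complex.I_ne_zero]
  have hr1 : e ((c : ℝ) / t) ≠ 1 := by
    intro hr
    rw [e, Complex.exp_eq_one_iff] at hr
    obtain ⟨n, hn⟩ := hr
    have h2 : (2 * Real.pi * Complex.I) * ((c : ℂ) / t) = (2 * Real.pi * Complex.I) * n := by
      rw [mul_comm _ (n : ℂ), ← hn]; push_cast; ring
    have h3 : (c : ℂ) / t = n := mul_left_cancel₀ hpi h2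
    have htC : (t : ℂ) ≠ 0 := Nat.cast_ne_zero.mpr ht.ne'
    have h4 : (c : ℂ) = n * t := by field_simp [htC] at h3; linear_combination h3
    have h5 : (c : ℤ) = n * t := by exact_mod_cast h4
    exact h (by exact_mod_cast (Dvd.intro n (by linarith) : (t : ℤ) ∣ (c : ℤ)))
  have hrt : (e ((c : ℝ) / t)) ^ t = 1 := by
    rw [← hterm t]
    have : ((c * t : ℕ) : ℝ) / t = ((c : ℤ) : ℝ) := by push_cast; field_simp
    rw [this, e_int]
  simp_rw [hterm]
  rw [geom_sum_eq hr1, hrt, sub_self, zero_div]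
lemma sum_Icc_eq_sum_range' {t : ℕ} (F : ℕ → ℂ) (hF : F 0 = F t) :
    ∑ y ∈ Icc 1 t, F y = ∑ y ∈ range t, F y := by
  cases t with
  | zero => simp
  | succ s =>
    rw [← Finset.Ico_add_one_right_eq_Icc, Finset.sum_Ico_eq_sum_range]
    simp only [Nat.add_sub_cancel]
    rw [Finset.sum_range_succ, Finset.sum_range_succ']
    rw [hF]
    simp [add_comm]

lemma exists_sol (W q t : ℕ) (hq : 0 < q) (ht : t = Nat.gcd q W) (h l' : ℕ)
    (hdvd : (t : ℤ) ∣ ((l' : ℤ) - h)) :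
    ∃ z, z ∈ (Icc 1 q).filter (fun l => (W * l + h) % q = l' % q) := by
  obtain ⟨c, hc⟩ := hdvd
  set u := Nat.gcdA q W with hu
  set v := Nat.gcdB q W with hv
  have hbez : (t : ℤ) = q * u + W * v := by
    rw [ht, hu, hv]; exact_mod_cast Nat.gcd_eq_gcd_ab q W
  set x : ℤ := v * c with hx
  have hsol : (q : ℤ) ∣ (l' : ℤ) - ((W : ℤ) * x + h) := by
    refine ⟨u * c, ?_⟩
    calc (l' : ℤ) - ((W : ℤ) * x + h) = ((l' : ℤ) - h) - W * v * c := by rw [hx]; ring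
      _ = t * c - W * v * c := by rw [hc]
      _ = (q * u + W * v) * c - W * v * c := by rw [← hbez]
      _ = q * (u * c) := by ring
  have hq0 : (q : ℤ) ≠ 0 := by exact_mod_cast hq.ne'
  have h1 : 0 ≤ (x - 1) % q := Int.emod_nonneg _ hq0
  have h2 : (x - 1) % q < q := Int.emod_lt_of_pos _ (by exact_mod_cast hq)
  set z : ℕ := ((x - 1) % q).toNat + 1 with hz
  have hzZ : (z : ℤ) = (x - 1) % q + 1 := by
    rw [hz]; push_cast [Int.toNat_of_nonneg h1]; ring
  have hzx : (q : ℤ) ∣ (z : ℤ) - x := by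
    rw [hzZ]
    have hmod := Int.emod_def (x - 1) q
    exact ⟨-((x - 1) / q), by rw [hmod]; ring⟩
  refine ⟨z, mem_filter.mpr ⟨?_, ?_⟩⟩
  · rw [mem_Icc, hz]
    omega
  · have hfin : (q : ℤ) ∣ (l' : ℤ) - ((W * z + h : ℕ) : ℤ) := by
      have hd := dvd_sub hsol (hzx.mul_left (W : ℤ))
      convert hd using 1
      · rfl
      · push_cast; ring
    exact (Nat.modEq_iff_dvd (n := q) (a := W * z + h) (b := l')).mpr hfin
lemma fiber_card_sum (W q a h t : ℕ) (hq : 0 < q) (ht : t = Nat.gcd q W)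
    (l' : ℕ) (z : ℕ)
    (hz : z ∈ (Icc 1 q).filter (fun l => (W * l + h) % q = l' % q)) :
    (((Icc 1 q).filter (fun l => (W * l + h) % q = l' % q)).card = t)
    ∧ ((∑ l ∈ (Icc 1 q).filter (fun l => (W * l + h) % q = l' % q),
          e ((((W * l ^ 2 + 2 * h * l) * a : ℕ) : ℝ) / q))
        = e ((((W * z ^ 2 + 2 * h * z) * a : ℕ) : ℝ) / q)
            * ∑ y ∈ range t, e (((2 * h * a * y : ℕ) : ℝ) / t)) := by
  set d := q / t with hd
  have htpos : 0 < t := ht ▸ Nat.gcd_pos_of_pos_left W hq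
  have htq : t ∣ q := ht ▸ Nat.gcd_dvd_left q W
  have htW : t ∣ W := ht ▸ Nat.gcd_dvd_right q W
  have hqeq : q = t * d := (Nat.mul_div_cancel' htq).symm
  have hdpos : 0 < d := by
    rcases Nat.eq_zero_or_pos d with h0 | h0
    · rw [h0, mul_zero] at hqeq; omega
    · exact h0
  have hdZ : (d : ℤ) ≠ 0 := by exact_mod_cast hdpos.ne'
  have htZ : (t : ℤ) ≠ 0 := by exact_mod_cast htpos.ne'
  -- key divisibility equivalence
  obtain ⟨W', hW'⟩ := htW
  have hqZ : (q : ℤ) = (t : ℤ) * d := by exact_mod_cast hqeq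
  have hWZ : (W : ℤ) = (t : ℤ) * W' := by exact_mod_cast hW'
  have hcopN : Nat.Coprime d W' := by
    have h1 := Nat.coprime_div_gcd_div_gcd (ht ▸ htpos : 0 < Nat.gcd q W)
    rw [← ht] at h1
    have h2 : W / t = W' := by rw [hW', Nat.mul_div_cancel_left _ htpos]
    rwa [h2] at h1
  have key : ∀ x : ℤ, ((q : ℤ) ∣ (W : ℤ) * x ↔ (d : ℤ) ∣ x) := by
    intro x
    have hcop : IsCoprime (d : ℤ) ((W' : ℕ) : ℤ) := by
      rw [Int.isCoprime_iff_gcd_eq_one, Int.gcd_natCast_natCast]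
      exact hcopN
    constructor
    · intro hx
      have h1 : (t : ℤ) * d ∣ (t : ℤ) * ((W' : ℤ) * x) := by
        have he : ((W : ℤ)) * x = (t : ℤ) * ((W' : ℤ) * x) := by rw [hWZ]; ring
        rw [← he, ← hqZ]; exact hx
      have h2 : (d : ℤ) ∣ (W' : ℤ) * x := (mul_dvd_mul_iff_left htZ).mp h1
      exact hcop.dvd_of_dvd_mul_left h2
    · rintro ⟨y, rfl⟩
      exact ⟨(W' : ℤ) * y, by rw [hqZ, hWZ]; ring⟩
  -- membership characterizations
  have mem_S : ∀ l : ℕ, (l ∈ (Icc 1 q).filter (fun l => (W * l + h) % q = l' % q)) ↔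
      (l ∈ Icc 1 q ∧ (q : ℤ) ∣ (l' : ℤ) - ((W : ℤ) * l + h)) := by
    intro l
    rw [mem_filter]
    constructor
    · rintro ⟨h1, h2⟩
      refine ⟨h1, ?_⟩
      have := (Nat.modEq_iff_dvd (n := q) (a := W * l + h) (b := l')).mp h2
      push_cast at this ⊢
      convert this using 1
    · rintro ⟨h1, h2⟩
      refine ⟨h1, ?_⟩
      have : (q : ℤ) ∣ (l' : ℤ) - ((W * l + h : ℕ) : ℤ) := by push_cast; convert h2 using 1
      exact (Nat.modEq_iff_dvd (n := q) (a := W * l + h) (b := l')).mpr this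
  obtain ⟨hz1, hz2⟩ := (mem_S z).mp hz
  have hz1' : 1 ≤ z ∧ z ≤ q := mem_Icc.mp hz1
  have mem_S' : ∀ l : ℕ, (l ∈ (Icc 1 q).filter (fun l => (W * l + h) % q = l' % q)) ↔
      (l ∈ Icc 1 q ∧ (d : ℤ) ∣ (l : ℤ) - z) := by
    intro l
    rw [mem_S l]
    refine and_congr_right fun _ => ?_
    have hre : (l' : ℤ) - ((W : ℤ) * l + h) = ((l' : ℤ) - ((W : ℤ) * z + h)) + (W : ℤ) * ((z : ℤ) - l) := by ring
    rw [hre, dvd_add_right hz2, key ((z : ℤ) - l), dvd_sub_comm]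
  set f : ℕ → ℕ := fun y => (z - 1 + y * d) % q + 1 with hf
  have hfz : ∀ y : ℕ, (q : ℤ) ∣ (f y : ℤ) - ((z : ℤ) + y * d) := by
    intro y
    have h1 : (z - 1 + y * d) % q ≡ z - 1 + y * d [MOD q] := Nat.mod_modEq _ _
    have h2 : f y ≡ z + y * d [MOD q] := by
      have := h1.add_right 1
      have he : z - 1 + y * d + 1 = z + y * d := by omega
      rwa [he] at this
    have := h2.dvd
    have he2 : ((z + y * d : ℕ) : ℤ) = (z : ℤ) + y * d := by push_cast; ring
    rw [he2] at this
    exact (dvd_sub_comm).mp this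
  have hfIcc : ∀ y : ℕ, f y ∈ Icc 1 q := by
    intro y
    have := Nat.mod_lt (z - 1 + y * d) hq
    simp only [hf, mem_Icc]
    omega
  have hfS : ∀ y : ℕ, f y ∈ (Icc 1 q).filter (fun l => (W * l + h) % q = l' % q) := by
    intro y
    rw [mem_S']
    refine ⟨hfIcc y, ?_⟩
    have h1 := hfz y
    have h2 : (d : ℤ) ∣ (f y : ℤ) - ((z : ℤ) + y * d) := dvd_trans ⟨t, by rw [hqeq]; push_cast; ring⟩ h1
    have h3 : (d : ℤ) ∣ (y : ℤ) * d := ⟨y, by ring⟩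
    have : (f y : ℤ) - z = ((f y : ℤ) - ((z : ℤ) + y * d)) + (y : ℤ) * d := by ring
    rw [this]
    exact dvd_add h2 h3
  have hinj : ∀ y1 ∈ range t, ∀ y2 ∈ range t, f y1 = f y2 → y1 = y2 := by
    intro y1 hy1 y2 hy2 hfe
    rw [mem_range] at hy1 hy2
    have h1 : (z - 1 + y1 * d) % q = (z - 1 + y2 * d) % q := by
      simp only [hf] at hfe; omega
    have h2 : (q : ℤ) ∣ ((z - 1 + y2 * d : ℕ) : ℤ) - ((z - 1 + y1 * d : ℕ) : ℤ) :=
      (Nat.ModEq.dvd (h1 : Nat.ModEq q _ _))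
    have hz1le : (1 : ℕ) ≤ z := hz1'.1
    have h3 : (q : ℤ) ∣ ((y2 : ℤ) - y1) * d := by
      convert h2 using 1
      push_cast [Nat.cast_sub hz1le]
      ring
    rw [hqeq] at h3
    have h4 : (t : ℤ) ∣ (y2 : ℤ) - y1 := by
      have : ((t * d : ℕ) : ℤ) = (t : ℤ) * d := by push_cast; ring
      rw [this] at h3
      exact (mul_dvd_mul_iff_right hdZ).mp h3
    have h5 : (y2 : ℤ) - y1 = 0 := Int.eq_zero_of_abs_lt_dvd h4 (abs_lt.mpr ⟨by omega, by omega⟩)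
    omega
  have hsurj : ∀ l ∈ (Icc 1 q).filter (fun l => (W * l + h) % q = l' % q),
      ∃ y ∈ range t, f y = l := by
    intro l hl
    obtain ⟨hl1, hl2⟩ := (mem_S' l).mp hl
    have hl1' := mem_Icc.mp hl1
    set k : ℤ := ((l : ℤ) - z) / d with hk
    have hkd : k * d = (l : ℤ) - z := Int.ediv_mul_cancel hl2
    have hynn : 0 ≤ k % t := Int.emod_nonneg k htZ
    have hylt : k % t < t := Int.emod_lt_of_pos k (by exact_mod_cast htpos)
    refine ⟨(k % t).toNat, mem_range.mpr ?_, ?_⟩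
    · omega
    · have hyZ : (((k % t).toNat : ℕ) : ℤ) = k % t := Int.toNat_of_nonneg hynn
      have hmod : (z - 1 + (k % t).toNat * d) % q = l - 1 := by
        have hcong : (q : ℤ) ∣ ((l - 1 : ℕ) : ℤ) - ((z - 1 + (k % t).toNat * d : ℕ) : ℤ) := by
          have hrw : ((l - 1 : ℕ) : ℤ) - ((z - 1 + (k % t).toNat * d : ℕ) : ℤ)
              = ((l : ℤ) - z) - (k % t) * d := by
            push_cast [Nat.cast_sub hl1'.1, Nat.cast_sub hz1'.1, hyZ]
            ring
          rw [hrw, ← hkd]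
          have : k * d - (k % t) * d = (k - k % t) * d := by ring
          rw [this]
          have hemod : k - k % t = t * (k / t) := by
            have := Int.emod_def k t
            linarith [this]
          rw [hemod, hqeq]
          exact ⟨k / t, by push_cast; ring⟩
        have := (Nat.modEq_iff_dvd (n := q)).mpr hcong
        have hlt : l - 1 < q := by omega
        calc (z - 1 + (k % t).toNat * d) % q = (l - 1) % q := this
          _ = l - 1 := Nat.mod_eq_of_lt hlt
      simp only [hf, hmod]
      omega
  have himg : (Icc 1 q).filter (fun l => (W * l + h) % q = l' % q) = (range t).image f := by
    ext l
    rw [mem_image]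
    constructor
    · intro hl
      obtain ⟨y, hy, hfy⟩ := hsurj l hl
      exact ⟨y, hy, hfy⟩
    · rintro ⟨y, hy, rfl⟩
      exact hfS y
  constructor
  · rw [himg, card_image_of_injOn, card_range]
    intro y1 hy1 y2 hy2
    exact hinj y1 hy1 y2 hy2
  · rw [himg, sum_image hinj]
    have hterm0 : ∀ (l y : ℕ), (q : ℤ) ∣ (l : ℤ) - ((z : ℤ) + y * d) →
        e ((((W * l ^ 2 + 2 * h * l) * a : ℕ) : ℝ) / q)
        = e ((((W * z ^ 2 + 2 * h * z) * a : ℕ) : ℝ) / q) * e (((2 * h * a * y : ℕ) : ℝ) / t) := by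
      intro l y hA
      set L : ℤ := (l : ℤ) with hL
      have hdLz : (d : ℤ) ∣ L - z := by
        have h2 : (d : ℤ) ∣ L - ((z : ℤ) + y * d) := dvd_trans ⟨t, by rw [hqeq]; push_cast; ring⟩ hA
        have : L - z = (L - ((z : ℤ) + y * d)) + (y : ℤ) * d := by ring
        rw [this]
        exact dvd_add h2 ⟨y, by ring⟩
      have hnum : (q : ℤ) ∣ (((W * l ^ 2 + 2 * h * l) * a : ℕ) : ℤ)
          - ((((W * z ^ 2 + 2 * h * z) * a : ℕ) : ℤ) + 2 * h * a * y * d) := by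
        have d1 : (q : ℤ) ∣ (W : ℤ) * ((L - z) * (L + z)) := (key _).mpr (Dvd.dvd.mul_right hdLz _)
        have hrw : (((W * l ^ 2 + 2 * h * l) * a : ℕ) : ℤ)
            - ((((W * z ^ 2 + 2 * h * z) * a : ℕ) : ℤ) + 2 * h * a * y * d)
            = (a : ℤ) * ((W : ℤ) * ((L - z) * (L + z))) + (2 * (h : ℤ) * a) * (L - ((z : ℤ) + y * d)) := by
          push_cast
          ring
        rw [hrw]
        exact dvd_add (d1.mul_left _) (hA.mul_left _)
      have step1 : e ((((W * l ^ 2 + 2 * h * l) * a : ℕ) : ℝ) / q)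
          = e ((((((W * z ^ 2 + 2 * h * z) * a : ℕ) : ℤ) + 2 * h * a * y * d : ℤ) : ℝ) / q) := by
        have hcast : (((W * l ^ 2 + 2 * h * l) * a : ℕ) : ℝ)
            = ((((W * l ^ 2 + 2 * h * l) * a : ℕ) : ℤ) : ℝ) := by push_cast; ring
        have hcast2 : (((W * z ^ 2 + 2 * h * z) * a : ℕ) : ℝ)
            = ((((W * z ^ 2 + 2 * h * z) * a : ℕ) : ℤ) : ℝ) := by push_cast; ring
        rw [hcast]
        exact e_div_congr hq hnum
      rw [step1]
      have step2 : (((((W * z ^ 2 + 2 * h * z) * a : ℕ) : ℤ) + 2 * h * a * y * d : ℤ) : ℝ) / q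
          = (((W * z ^ 2 + 2 * h * z) * a : ℕ) : ℝ) / q + ((2 * h * a * y : ℕ) : ℝ) / t := by
        have hqR : (q : ℝ) = (t : ℝ) * d := by exact_mod_cast hqeq
        have htR : (t : ℝ) ≠ 0 := by positivity
        have hdR : (d : ℝ) ≠ 0 := by positivity
        rw [hqR]
        push_cast
        field_simp
      rw [step2, e_add]
    have hterm : ∀ y ∈ range t,
        e ((((W * (f y) ^ 2 + 2 * h * (f y)) * a : ℕ) : ℝ) / q)
        = e ((((W * z ^ 2 + 2 * h * z) * a : ℕ) : ℝ) / q) * e (((2 * h * a * y : ℕ) : ℝ) / t) :=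
      fun y _ => hterm0 (f y) y (hfz y)
    rw [Finset.sum_congr rfl hterm, ← Finset.mul_sum]

theorem partial_sum_decomposition (W q a b h t : ℕ)
    (hW : 0 < W) (hq : 0 < q) (ha : 0 < a) (hb : 0 < b)
    (haq : Nat.gcd a q = 1) (hhW : Nat.gcd h W = 1) (ht : t = Nat.gcd q W)
    (l' : ℕ) (hl' : l' ∈ Finset.Icc 1 q) (hl'q : Nat.gcd l' q = 1)
    (hdvd : (t : ℤ) ∣ ((l' : ℤ) - (h : ℤ))) :
    (((Finset.Icc 1 q).filter (fun l => (W * l + h) % q = l' % q)).card = t)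
    ∧ (∀ z ∈ (Finset.Icc 1 q).filter (fun l => (W * l + h) % q = l' % q),
        (∑ l ∈ (Finset.Icc 1 q).filter (fun l => (W * l + h) % q = l' % q),
          e ((((W * l ^ 2 + 2 * h * l) * a : ℕ) : ℝ) / q))
        = e ((((W * z ^ 2 + 2 * h * z) * a : ℕ) : ℝ) / q)
            * ∑ y ∈ Finset.Icc 1 t, e (((2 * h * a * y : ℕ) : ℝ) / t))
    ∧ (¬ t ∣ 2 →
        ((∑ l ∈ (Finset.Icc 1 q).filter (fun l => (W * l + h) % q = l' % q),
            e ((((W * l ^ 2 + 2 * h * l) * a : ℕ) : ℝ) / q)) = 0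
        ∧ (∑ l ∈ (Finset.Icc 1 q).filter (fun l => Nat.gcd (W * l + h) q = 1),
            e ((((W * l ^ 2 + 2 * h * l) * a : ℕ) : ℝ) / q)) = 0)) := by
  have htpos : 0 < t := ht ▸ Nat.gcd_pos_of_pos_left W hq
  have htq : t ∣ q := ht ▸ Nat.gcd_dvd_left q W
  have htW : t ∣ W := ht ▸ Nat.gcd_dvd_right q W
  -- Icc 1 t sum equals range t sum
  have hIccRange : ∑ y ∈ Finset.Icc 1 t, e (((2 * h * a * y : ℕ) : ℝ) / t)
      = ∑ y ∈ Finset.range t, e (((2 * h * a * y : ℕ) : ℝ) / t) := by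
    apply sum_Icc_eq_sum_range'
    have hF0 : e (((2 * h * a * 0 : ℕ) : ℝ) / t) = 1 := by
      norm_num
      simpa using e_int 0
    have hFt : e (((2 * h * a * t : ℕ) : ℝ) / t) = 1 := by
      have htR : (t : ℝ) ≠ 0 := by positivity
      have hcast : ((2 * h * a * t : ℕ) : ℝ) / t = ((2 * h * a : ℤ) : ℝ) := by
        push_cast; field_simp
      rw [hcast, e_int]
    rw [hF0, hFt]
  obtain ⟨z0, hz0⟩ := exists_sol W q t hq ht h l' hdvd
  have hmain := fiber_card_sum W q a h t hq ht l' z0 hz0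
  refine ⟨hmain.1, ?_, ?_⟩
  · intro z hzS
    rw [(fiber_card_sum W q a h t hq ht l' z hzS).2, hIccRange]
  · intro h2
    -- t does not divide 2*h*a
    have hta : Nat.Coprime t a := ((Nat.coprime_comm.mp haq).coprime_dvd_left htq)
    have hth : Nat.Coprime t h := ((Nat.coprime_comm.mp hhW).coprime_dvd_left htW)
    have hndvd : ¬ t ∣ 2 * h * a := by
      intro hd
      have hd1 : t ∣ 2 * h := (Nat.Coprime.dvd_of_dvd_mul_right hta) hd
      have hd2 : t ∣ 2 := (Nat.Coprime.dvd_of_dvd_mul_right hth) hd1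
      exact h2 hd2
    have hgeo : ∑ y ∈ Finset.range t, e (((2 * h * a * y : ℕ) : ℝ) / t) = 0 :=
      sum_range_e_eq_zero htpos hndvd
    -- fiber sums vanish
    have hfiber : ∀ (r : ℕ), (t : ℤ) ∣ ((r : ℤ) - h) →
        (∑ l ∈ (Finset.Icc 1 q).filter (fun l => (W * l + h) % q = r % q),
            e ((((W * l ^ 2 + 2 * h * l) * a : ℕ) : ℝ) / q)) = 0 := by
      intro r hr
      rcases ((Finset.Icc 1 q).filter
          (fun l => (W * l + h) % q = r % q)).eq_empty_or_nonempty with he | ⟨z1, hz1⟩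
      · rw [he, Finset.sum_empty]
      · rw [(fiber_card_sum W q a h t hq ht r z1 hz1).2, hgeo, mul_zero]
    constructor
    · exact hfiber l' hdvd
    · rw [← Finset.sum_fiberwise_of_maps_to
        (g := fun l => (W * l + h) % q) (t := Finset.range q)
        (fun l _ => Finset.mem_range.mpr (Nat.mod_lt _ hq))
        (fun l => e ((((W * l ^ 2 + 2 * h * l) * a : ℕ) : ℝ) / q))]
      apply Finset.sum_eq_zero
      intro r hrq
      have hrlt : r < q := Finset.mem_range.mp hrq
      rcases (((Finset.Icc 1 q).filter (fun l => Nat.gcd (W * l + h) q = 1)).filter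
          (fun l => (W * l + h) % q = r)).eq_empty_or_nonempty with he | ⟨l0, hl0⟩
      · rw [he, Finset.sum_empty]
      · simp only [Finset.mem_filter] at hl0
        obtain ⟨⟨hl0Icc, hl0gcd⟩, hl0r⟩ := hl0
        have hrgcd : Nat.gcd r q = 1 := by
          have hg : Nat.gcd q (W * l0 + h) = Nat.gcd ((W * l0 + h) % q) q := Nat.gcd_rec q _
          rw [hl0r] at hg
          rw [← hg, Nat.gcd_comm]
          exact hl0gcd
        have hrmod : r % q = r := Nat.mod_eq_of_lt hrlt
        have htr : (t : ℤ) ∣ ((r : ℤ) - h) := by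
          have hme : (W * l0 + h) ≡ r [MOD q] := by
            unfold Nat.ModEq
            rw [hrmod]
            exact hl0r
          have hqd : (q : ℤ) ∣ (r : ℤ) - ((W * l0 + h : ℕ) : ℤ) := hme.dvd
          have htd : (t : ℤ) ∣ (r : ℤ) - ((W * l0 + h : ℕ) : ℤ) :=
            dvd_trans (by exact_mod_cast htq) hqd
          have hWd : (t : ℤ) ∣ (W : ℤ) * l0 := Dvd.dvd.mul_right (by exact_mod_cast htW) _
          have : (r : ℤ) - h = ((r : ℤ) - ((W * l0 + h : ℕ) : ℤ)) + (W : ℤ) * l0 := by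
            push_cast; ring
          rw [this]
          exact dvd_add htd hWd
        have hset : ((Finset.Icc 1 q).filter (fun l => Nat.gcd (W * l + h) q = 1)).filter
            (fun l => (W * l + h) % q = r)
            = (Finset.Icc 1 q).filter (fun l => (W * l + h) % q = r % q) := by
          rw [Finset.filter_filter]
          apply Finset.filter_congr
          intro l hl
          simp only [hrmod]
          constructor
          · rintro ⟨_, hmod⟩; exact hmod
          · intro hmod
            refine ⟨?_, hmod⟩
            have hg : Nat.gcd q (W * l + h) = Nat.gcd ((W * l + h) % q) q := Nat.gcd_rec q _
            rw [hmod] at hg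
            rw [Nat.gcd_comm, hg]
            exact hrgcd
        rw [hset]
        exact hfiber r htr
end

section
/- Let W = 8K with K odd, and let b be coprime to W. Then Σ_{h ∈ [W], gcd(h,W)=1, h^2 ≡ b (mod W)} e((h^2 − b)/(2W)) = 0, where e(x) = exp(2πi x). -/
lemma e_add_half (x : ℝ) (n : ℤ) : e (x + (2 * n + 1) / 2) = - e x := by
  unfold e
  have h : (2 * (Real.pi : ℂ) * Complex.I * ((x : ℂ) + ((2 * (n : ℂ) + 1) / 2)))
      = 2 * (Real.pi : ℂ) * Complex.I * (x : ℂ) + ((n : ℂ) * (2 * Real.pi * Complex.I)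
        + Real.pi * Complex.I) := by ring
  push_cast
  rw [h, Complex.exp_add, Complex.exp_add, Complex.exp_int_mul_two_pi_mul_I,
    Complex.exp_pi_mul_I]
  ring

lemma step (K b u : ℕ) (hK0 : 0 < K) (hu : Odd u) :
    e (((((u : ℤ) + 4 * K) ^ 2 - (b : ℤ) : ℤ) : ℝ) / (2 * (8 * K : ℕ)))
      = - e (((((u : ℤ) ^ 2 - (b : ℤ)) : ℤ) : ℝ) / (2 * (8 * K : ℕ))) := by
  obtain ⟨t, ht⟩ := hu
  have hKR : ((K : ℝ)) ≠ 0 := by positivity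
  have h2 := e_add_half (((((u : ℤ) ^ 2 - (b : ℤ)) : ℤ) : ℝ) / (2 * (8 * K : ℕ)))
    ((t : ℤ) + (K : ℤ))
  have harg : ((((u : ℤ) + 4 * K) ^ 2 - (b : ℤ) : ℤ) : ℝ) / (2 * (8 * K : ℕ))
      = ((((u : ℤ) ^ 2 - (b : ℤ)) : ℤ) : ℝ) / (2 * (8 * K : ℕ))
        + (2 * (((t : ℤ) + (K : ℤ) : ℤ) : ℝ) + 1) / 2 := by
    subst ht
    push_cast
    field_simp
    ring
  rw [harg, h2]

theorem sqrt_sum_vanishes (K W b : ℕ) (hK : Odd K) (hW : W = 8 * K)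
    (hb : Nat.gcd b W = 1) :
    (∑ h ∈ (Finset.Icc 1 W).filter (fun h => Nat.gcd h W = 1 ∧ h ^ 2 % W = b % W),
        e (((((h : ℤ) ^ 2 - (b : ℤ)) : ℤ) : ℝ) / (2 * W))) = 0 := by
  subst hW
  have hK0 : 0 < K := hK.pos
  have hodd : ∀ h : ℕ, Nat.gcd h (8 * K) = 1 → Odd h := by
    intro h hh
    have h2 : Nat.Coprime h 2 := by
      have : (2 : ℕ) ∣ 8 * K := ⟨4 * K, by ring⟩
      exact Nat.Coprime.coprime_dvd_right this hh
    exact Nat.coprime_two_right.mp h2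
  have hcop : ∀ u : ℕ, Nat.Coprime (u + 4 * K) (8 * K) ↔ Nat.Coprime u (8 * K) := by
    intro u
    have key : ∀ v : ℕ, Nat.Coprime v 2 → Nat.Coprime v (4 * K) → Nat.Coprime v (8 * K) := by
      intro v a b
      have e8 : (8 : ℕ) * K = 2 * (4 * K) := by ring
      rw [e8]; exact Nat.Coprime.mul_right a b
    constructor
    · intro h
      have h2 : Nat.Coprime (u + 4 * K) 2 := h.coprime_dvd_right ⟨4 * K, by ring⟩
      have h4 : Nat.Coprime (u + 4 * K) (4 * K) := h.coprime_dvd_right ⟨2, by ring⟩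
      have h2' : Nat.Coprime u 2 := by
        rw [Nat.coprime_two_right] at h2 ⊢
        rcases h2 with ⟨t, ht⟩; exact ⟨t - 2 * K, by omega⟩
      have h4' : Nat.Coprime u (4 * K) :=
        (Nat.coprime_add_mul_right_left u (4 * K) 1).mp (by simpa using h4)
      exact key u h2' h4'
    · intro h
      have h2 : Nat.Coprime u 2 := h.coprime_dvd_right ⟨4 * K, by ring⟩
      have h4 : Nat.Coprime u (4 * K) := h.coprime_dvd_right ⟨2, by ring⟩
      have h2' : Nat.Coprime (u + 4 * K) 2 := by
        rw [Nat.coprime_two_right] at h2 ⊢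
        rcases h2 with ⟨t, ht⟩; exact ⟨t + 2 * K, by omega⟩
      have h4' : Nat.Coprime (u + 4 * K) (4 * K) := by
        simpa using (Nat.coprime_add_mul_right_left u (4 * K) 1).mpr h4
      exact key _ h2' h4'
  have hsq : ∀ u : ℕ, (u + 4 * K) ^ 2 % (8 * K) = u ^ 2 % (8 * K) := by
    intro u
    have : (u + 4 * K) ^ 2 = u ^ 2 + (u + 2 * K) * (8 * K) := by ring
    rw [this, Nat.add_mul_mod_self_right]
  set s := (Finset.Icc 1 (8 * K)).filter
      (fun h => Nat.gcd h (8 * K) = 1 ∧ h ^ 2 % (8 * K) = b % (8 * K)) with hs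
  have hmem : ∀ h, h ∈ s ↔ (1 ≤ h ∧ h ≤ 8 * K) ∧ Nat.gcd h (8 * K) = 1
      ∧ h ^ 2 % (8 * K) = b % (8 * K) := by
    intro h; simp [hs, Finset.mem_filter, Finset.mem_Icc, and_assoc]
  refine Finset.sum_involution (fun h _ => if h ≤ 4 * K then h + 4 * K else h - 4 * K)
    ?_ ?_ ?_ ?_
  · -- cancellation
    intro h ha
    beta_reduce
    rw [hmem] at ha
    obtain ⟨⟨h1, h2⟩, hg, _⟩ := ha
    have hodd' : Odd h := hodd h hg
    by_cases hcase : h ≤ 4 * K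
    · rw [if_pos hcase]
      have hc : ((((h + 4 * K : ℕ) : ℤ) ^ 2 - (b : ℤ) : ℤ) : ℝ) / (2 * ((8 * K : ℕ) : ℝ))
          = ((((h : ℤ) + 4 * K) ^ 2 - (b : ℤ) : ℤ) : ℝ) / (2 * ((8 * K : ℕ) : ℝ)) := by
        push_cast; ring_nf
      rw [hc, step K b h hK0 hodd']
      ring
    · rw [if_neg hcase]
      push_neg at hcase
      obtain ⟨u, rfl⟩ : ∃ u, h = u + 4 * K := ⟨h - 4 * K, by omega⟩
      have huodd : Odd u := by
        rcases hodd' with ⟨t, ht⟩; exact ⟨t - 2 * K, by omega⟩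
      simp only [Nat.add_sub_cancel]
      have hc : ((((u + 4 * K : ℕ) : ℤ) ^ 2 - (b : ℤ) : ℤ) : ℝ) / (2 * ((8 * K : ℕ) : ℝ))
          = ((((u : ℤ) + 4 * K) ^ 2 - (b : ℤ) : ℤ) : ℝ) / (2 * ((8 * K : ℕ) : ℝ)) := by
        push_cast; ring_nf
      rw [hc, step K b u hK0 huodd]
      ring
  · -- not fixed
    intro h ha _
    beta_reduce
    rw [hmem] at ha
    split_ifs <;> omega
  · -- membership
    intro h ha
    beta_reduce
    rw [hmem] at ha
    obtain ⟨⟨h1, h2⟩, hg, hq⟩ := ha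
    have hodd' : Odd h := hodd h hg
    have hmod : h % 2 = 1 := Nat.odd_iff.mp hodd'
    have hK2 : K % 2 = 1 := Nat.odd_iff.mp ‹Odd K›
    rw [hmem]
    split_ifs with hcase
    · exact ⟨⟨by omega, by omega⟩, (hcop h).mpr hg, by rw [hsq h]; exact hq⟩
    · push_neg at hcase
      obtain ⟨u, rfl⟩ : ∃ u, h = u + 4 * K := ⟨h - 4 * K, by omega⟩
      simp only [Nat.add_sub_cancel]
      exact ⟨⟨by omega, by omega⟩, (hcop u).mp hg, by rw [← hsq u]; exact hq⟩
  · -- involutive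
    intro h ha
    beta_reduce
    rw [hmem] at ha
    obtain ⟨⟨h1, h2⟩, hg, _⟩ := ha
    have hmod : h % 2 = 1 := Nat.odd_iff.mp (hodd h hg)
    split_ifs <;> omega
end

section
/- For N ≥ 2, Σ_{1 ≤ k < N} (Σ_{d | k} 1)^2 = O(N (log N)^3). -/
open Finset

-- harmonic bound
lemma harm_le {N : ℕ} (hN : 2 ≤ N) :
    ∑ a ∈ Finset.Ico 1 N, ((a : ℝ))⁻¹ ≤ 3 * Real.log N := by
  have h1 : (1:ℕ) ≤ N - 1 := by omega
  have hIco : Finset.Ico 1 N = Finset.Icc 1 (N - 1) := by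
    rw [← Finset.Ico_add_one_right_eq_Icc]; congr 1; omega
  have hsum : ∑ a ∈ Finset.Ico 1 N, ((a : ℝ))⁻¹ = ((harmonic (N-1) : ℚ) : ℝ) := by
    rw [hIco, harmonic_eq_sum_Icc]
    push_cast
    rfl
  rw [hsum]
  have h2 := harmonic_le_one_add_log (N - 1)
  have h3 : Real.log (N - 1 : ℕ) ≤ Real.log N := by
    apply Real.log_le_log (by exact_mod_cast h1)
    exact_mod_cast Nat.sub_le N 1
  have h4 : Real.log 2 ≤ Real.log N := by
    apply Real.log_le_log (by norm_num)
    exact_mod_cast hN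
  have h5 : (0.6931471803 : ℝ) < Real.log 2 := Real.log_two_gt_d9
  linarith

-- sum of reciprocals over multiples of g
lemma mult_sum_le {g N : ℕ} (hg : 1 ≤ g) :
    ∑ d ∈ (Finset.Ico 1 N).filter (g ∣ ·), ((d : ℝ))⁻¹
      ≤ (g : ℝ)⁻¹ * ∑ a ∈ Finset.Ico 1 N, ((a : ℝ))⁻¹ := by
  have hsub : (Finset.Ico 1 N).filter (g ∣ ·) ⊆ (Finset.Ico 1 N).image (fun a => g * a) := by
    intro d hd
    simp only [Finset.mem_filter, Finset.mem_Ico] at hd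
    obtain ⟨⟨h1, h2⟩, c, hc⟩ := hd
    refine Finset.mem_image.mpr ⟨c, ?_, hc.symm⟩
    simp only [Finset.mem_Ico]
    constructor
    · rcases Nat.eq_zero_or_pos c with h | h
      · subst h; simp at hc; omega
      · exact h
    · calc c ≤ g * c := Nat.le_mul_of_pos_left c (by omega)
        _ = d := hc.symm
        _ < N := h2
  calc ∑ d ∈ (Finset.Ico 1 N).filter (g ∣ ·), ((d : ℝ))⁻¹
      ≤ ∑ d ∈ (Finset.Ico 1 N).image (fun a => g * a), ((d : ℝ))⁻¹ := by
        apply Finset.sum_le_sum_of_subset_of_nonneg hsub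
        intro i _ _; positivity
    _ = ∑ a ∈ Finset.Ico 1 N, ((g * a : ℕ) : ℝ)⁻¹ := by
        rw [Finset.sum_image]
        intro a _ b _ h
        exact Nat.eq_of_mul_eq_mul_left (by omega) h
    _ = (g : ℝ)⁻¹ * ∑ a ∈ Finset.Ico 1 N, ((a : ℝ))⁻¹ := by
        rw [Finset.mul_sum]
        apply Finset.sum_congr rfl
        intro a _
        push_cast
        rw [mul_inv]

-- count of multiples
lemma count_mult_le {L N : ℕ} (hL : 1 ≤ L) :
    (((Finset.Ico 1 N).filter (L ∣ ·)).card : ℝ) ≤ (N : ℝ) / L := by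
  have h : Finset.Ico 1 N = Finset.Ioc 0 (N - 1) := by
    rcases Nat.eq_zero_or_pos N with h | h
    · subst h; rfl
    · ext x; simp only [Finset.mem_Ico, Finset.mem_Ioc]; omega
  rw [h, Nat.Ioc_filter_dvd_card_eq_div]
  calc (((N-1) / L : ℕ) : ℝ) ≤ ((N-1 : ℕ) : ℝ) / L := Nat.cast_div_le
    _ ≤ (N : ℝ) / L := by
        gcongr
        exact_mod_cast Nat.sub_le N 1

lemma swap3 (s : Finset ℕ) (F : ℕ → ℕ → ℕ → ℝ) :
    ∑ d1 ∈ s, ∑ d2 ∈ s, ∑ g ∈ s, F d1 d2 g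
      = ∑ g ∈ s, ∑ d1 ∈ s, ∑ d2 ∈ s, F d1 d2 g := by
  calc ∑ d1 ∈ s, ∑ d2 ∈ s, ∑ g ∈ s, F d1 d2 g
      = ∑ d1 ∈ s, ∑ g ∈ s, ∑ d2 ∈ s, F d1 d2 g :=
        Finset.sum_congr rfl fun _ _ => Finset.sum_comm
    _ = ∑ g ∈ s, ∑ d1 ∈ s, ∑ d2 ∈ s, F d1 d2 g := Finset.sum_comm


theorem divisor_sq_mean_value :
    ∃ C : ℝ, ∀ N : ℕ, 2 ≤ N →
      (∑ k ∈ Finset.Ico 1 N, ((k.divisors.card : ℝ)) ^ 2)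
        ≤ C * N * (Real.log N) ^ 3 := by
  refine ⟨27, fun N hN => ?_⟩
  set H : ℝ := ∑ a ∈ Finset.Ico 1 N, ((a : ℝ))⁻¹ with hHdef
  have hHnn : 0 ≤ H := Finset.sum_nonneg fun i _ => by positivity
  have hHle : H ≤ 3 * Real.log N := harm_le hN
  have hlogN : 0 ≤ Real.log N := Real.log_nonneg (by exact_mod_cast le_trans (by norm_num : (1:ℕ) ≤ 2) hN)
  have hNnn : (0:ℝ) ≤ N := by positivity
  calc ∑ k ∈ Finset.Ico 1 N, ((k.divisors.card : ℝ)) ^ 2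
      = ∑ k ∈ Finset.Ico 1 N, ∑ d1 ∈ Finset.Ico 1 N, ∑ d2 ∈ Finset.Ico 1 N,
          (if d1 ∣ k then (1:ℝ) else 0) * (if d2 ∣ k then (1:ℝ) else 0) := by
        apply Finset.sum_congr rfl
        intro k hk
        simp only [Finset.mem_Ico] at hk
        have hdiv : k.divisors = (Finset.Ico 1 N).filter (· ∣ k) := by
          ext d
          simp only [Nat.mem_divisors, Finset.mem_filter, Finset.mem_Ico]
          constructor
          · rintro ⟨hd, hk0⟩
            refine ⟨⟨?_, ?_⟩, hd⟩
            · rcases Nat.eq_zero_or_pos d with h | h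
              · subst h; simp at hd; omega
              · exact h
            · exact lt_of_le_of_lt (Nat.le_of_dvd (by omega) hd) hk.2
          · rintro ⟨_, hd⟩; exact ⟨hd, by omega⟩
        have hcard : (k.divisors.card : ℝ)
            = ∑ d ∈ Finset.Ico 1 N, (if d ∣ k then (1:ℝ) else 0) := by
          rw [hdiv, Finset.sum_boole]
        rw [hcard, pow_two, Finset.sum_mul_sum]
    _ = ∑ d1 ∈ Finset.Ico 1 N, ∑ d2 ∈ Finset.Ico 1 N, ∑ k ∈ Finset.Ico 1 N,
          (if d1 ∣ k then (1:ℝ) else 0) * (if d2 ∣ k then (1:ℝ) else 0) := by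
        rw [Finset.sum_comm]
        exact Finset.sum_congr rfl fun d1 _ => Finset.sum_comm

    _ ≤ ∑ d1 ∈ Finset.Ico 1 N, ∑ d2 ∈ Finset.Ico 1 N,
          (N:ℝ) * (∑ g ∈ Finset.Ico 1 N, if g ∣ d1 ∧ g ∣ d2 then (g:ℝ) else 0)
            * ((d1:ℝ)⁻¹ * (d2:ℝ)⁻¹) := by
        apply Finset.sum_le_sum
        intro d1 hd1
        apply Finset.sum_le_sum
        intro d2 hd2
        simp only [Finset.mem_Ico] at hd1 hd2
        have hd10 : d1 ≠ 0 := by omega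
        have hd20 : d2 ≠ 0 := by omega
        have hlcm0 : Nat.lcm d1 d2 ≠ 0 := Nat.lcm_ne_zero hd10 hd20
        have hinner : ∑ k ∈ Finset.Ico 1 N,
              (if d1 ∣ k then (1:ℝ) else 0) * (if d2 ∣ k then (1:ℝ) else 0)
            = (((Finset.Ico 1 N).filter (Nat.lcm d1 d2 ∣ ·)).card : ℝ) := by
          rw [← Finset.sum_boole]
          apply Finset.sum_congr rfl
          intro k _
          by_cases h1 : d1 ∣ k <;> by_cases h2 : d2 ∣ k <;>
            simp [h1, h2, Nat.lcm_dvd_iff]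
        rw [hinner]
        have heq : ((Nat.gcd d1 d2 : ℝ)) * (Nat.lcm d1 d2) = (d1:ℝ) * d2 := by
          exact_mod_cast Nat.gcd_mul_lcm d1 d2
        have step1 : (((Finset.Ico 1 N).filter (Nat.lcm d1 d2 ∣ ·)).card : ℝ)
            ≤ (N:ℝ) / (Nat.lcm d1 d2) := count_mult_le (Nat.one_le_iff_ne_zero.mpr hlcm0)
        have step2 : (N:ℝ) / (Nat.lcm d1 d2)
            = (N:ℝ) * (Nat.gcd d1 d2 : ℝ) * ((d1:ℝ)⁻¹ * (d2:ℝ)⁻¹) := by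
          have h1 : (d1:ℝ) ≠ 0 := Nat.cast_ne_zero.mpr hd10
          have h2 : (d2:ℝ) ≠ 0 := Nat.cast_ne_zero.mpr hd20
          have hl : (Nat.lcm d1 d2 : ℝ) ≠ 0 := Nat.cast_ne_zero.mpr hlcm0
          field_simp
          linear_combination (-1:ℝ) * heq
        have hgcd_mem : Nat.gcd d1 d2 ∈ Finset.Ico 1 N := by
          simp only [Finset.mem_Ico]
          constructor
          · exact Nat.one_le_iff_ne_zero.mpr (Nat.gcd_ne_zero_left hd10)
          · exact lt_of_le_of_lt (Nat.gcd_le_left d2 (by omega)) hd1.2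
        have hgcd_le : ((Nat.gcd d1 d2 : ℝ))
            ≤ ∑ g ∈ Finset.Ico 1 N, if g ∣ d1 ∧ g ∣ d2 then (g:ℝ) else 0 := by
          have h := Finset.single_le_sum
            (f := fun g => if g ∣ d1 ∧ g ∣ d2 then (g:ℝ) else 0)
            (fun i _ => by positivity) hgcd_mem
          refine le_trans (le_of_eq ?_) h
          simp [Nat.gcd_dvd_left, Nat.gcd_dvd_right]
        calc (((Finset.Ico 1 N).filter (Nat.lcm d1 d2 ∣ ·)).card : ℝ)
            ≤ (N:ℝ) * (Nat.gcd d1 d2 : ℝ) * ((d1:ℝ)⁻¹ * (d2:ℝ)⁻¹) := by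
              rw [← step2]; exact step1
          _ ≤ _ := by
              gcongr <;> positivity
    _ = (N:ℝ) * ∑ g ∈ Finset.Ico 1 N, (g:ℝ) *
          ((∑ d ∈ Finset.Ico 1 N, if g ∣ d then (d:ℝ)⁻¹ else 0)
            * (∑ d ∈ Finset.Ico 1 N, if g ∣ d then (d:ℝ)⁻¹ else 0)) := by
        simp only [Finset.mul_sum, Finset.sum_mul]
        rw [swap3 (Finset.Ico 1 N)
          (fun d1 d2 g => ((N:ℝ) * (if g ∣ d1 ∧ g ∣ d2 then (g:ℝ) else 0))
            * ((d1:ℝ)⁻¹ * (d2:ℝ)⁻¹))]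
        apply Finset.sum_congr rfl
        intro g _
        apply Finset.sum_congr rfl
        intro d1 _
        apply Finset.sum_congr rfl
        intro d2 _
        by_cases h1 : g ∣ d1 <;> by_cases h2 : g ∣ d2 <;>
          simp [h1, h2] <;> try ring
    _ ≤ (N:ℝ) * ∑ g ∈ Finset.Ico 1 N, (g:ℝ) *
          (((g:ℝ)⁻¹ * H) * ((g:ℝ)⁻¹ * H)) := by
        apply mul_le_mul_of_nonneg_left ?_ hNnn
        apply Finset.sum_le_sum
        intro g hg
        simp only [Finset.mem_Ico] at hg
        have hA : ∑ d ∈ Finset.Ico 1 N, (if g ∣ d then (d:ℝ)⁻¹ else 0)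
            ≤ (g:ℝ)⁻¹ * H := by
          rw [← Finset.sum_filter]
          exact mult_sum_le hg.1
        have hAnn : (0:ℝ) ≤ ∑ d ∈ Finset.Ico 1 N, (if g ∣ d then (d:ℝ)⁻¹ else 0) :=
          Finset.sum_nonneg fun i _ => by positivity
        have hBnn : (0:ℝ) ≤ (g:ℝ)⁻¹ * H := by positivity
        apply mul_le_mul_of_nonneg_left ?_ (by positivity)
        exact mul_le_mul hA hA hAnn hBnn
    _ = (N:ℝ) * (H^2 * ∑ g ∈ Finset.Ico 1 N, (g:ℝ)⁻¹) := by
        simp only [Finset.mul_sum]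
        apply Finset.sum_congr rfl
        intro g hg
        simp only [Finset.mem_Ico] at hg
        have : (g:ℝ) ≠ 0 := Nat.cast_ne_zero.mpr (by omega)
        field_simp
    _ = (N:ℝ) * H^3 := by rw [← hHdef]; ring
    _ ≤ (N:ℝ) * (3 * Real.log N)^3 := by
        apply mul_le_mul_of_nonneg_left ?_ hNnn
        exact pow_le_pow_left₀ hHnn hHle 3
    _ = 27 * N * (Real.log N)^3 := by ring
end

section
/- For every integer r ≥ 1 and all M, Q ≥ 2, Σ_{k ≤ 2M} (Σ_{q ≤ Q, q | k} 1)^r ≪ M (r log Q)^{2^r} + Q^r, with an absolute implied constant. In particular, Σ_{k ≤ 2M} (Σ_{q ≤ Q, q | k} 1)^r ≪ M (r log Q)^{2^r} when M ≥ Q^r. -/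
open Finset

private lemma tau_submult (m n : ℕ) (hm : m ≠ 0) (hn : n ≠ 0) :
    ((m * n).divisors.card) ≤ m.divisors.card * n.divisors.card := by
  rw [← Finset.card_product]
  apply Finset.card_le_card_of_injOn (fun d => (d.gcd m, d / d.gcd m))
  · intro d hd
    rw [Finset.mem_coe, Nat.mem_divisors] at hd
    obtain ⟨hdvd, hmn⟩ := hd
    have hd0 : d ≠ 0 := by rintro rfl; exact hmn (zero_dvd_iff.mp hdvd)
    have hg0 : 0 < d.gcd m := Nat.gcd_pos_of_pos_left _ (Nat.pos_of_ne_zero hd0)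
    have hgd : d.gcd m ∣ d := Nat.gcd_dvd_left _ _
    have hgm : d.gcd m ∣ m := Nat.gcd_dvd_right _ _
    rw [Finset.mem_coe, Finset.mem_product, Nat.mem_divisors, Nat.mem_divisors]
    refine ⟨⟨hgm, hm⟩, ?_, hn⟩
    have hco : Nat.Coprime (d / d.gcd m) (m / d.gcd m) :=
      Nat.coprime_div_gcd_div_gcd hg0
    have h1 : d / d.gcd m ∣ (m / d.gcd m) * n := by
      set g := d.gcd m with hgdef
      obtain ⟨d', hd'⟩ := hgd
      have hq : d / g = d' := by rw [hd', Nat.mul_div_cancel_left _ hg0]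
      rw [hq]
      have h2 : g * d' ∣ g * ((m / g) * n) := by
        rw [← mul_assoc, Nat.mul_div_cancel' hgm, ← hd']; exact hdvd
      exact (mul_dvd_mul_iff_left (by omega : g ≠ 0)).mp h2
    exact hco.dvd_of_dvd_mul_left h1
  · intro a ha b hb hab
    simp only [Prod.mk.injEq] at hab
    have ha' : a.gcd m ∣ a := Nat.gcd_dvd_left _ _
    have hb' : b.gcd m ∣ b := Nat.gcd_dvd_left _ _
    calc a = a.gcd m * (a / a.gcd m) := (Nat.mul_div_cancel' ha').symm
    _ = b.gcd m * (b / b.gcd m) := by rw [hab.2, hab.1]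
    _ = b := Nat.mul_div_cancel' hb'

private lemma count_pow_le (Q r k : ℕ) (hk : 0 < k) :
    ((Icc 1 Q).filter (fun q => q ∣ k)).card ^ r ≤
      ∑ d ∈ (Icc 1 (Q ^ r)).filter (fun d => d ∣ k), d.divisors.card ^ r := by
  classical
  set S := (Icc 1 Q).filter (fun q => q ∣ k) with hS
  set T := (Icc 1 (Q ^ r)).filter (fun d => d ∣ k) with hT
  have hmem : ∀ q ∈ S, 1 ≤ q ∧ q ≤ Q ∧ q ∣ k := by
    intro q hq
    simp only [hS, mem_filter, mem_Icc] at hq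
    exact ⟨hq.1.1, hq.1.2, hq.2⟩
  have hcard : S.card ^ r = (Fintype.piFinset (fun _ : Fin r => S)).card := by
    rw [Fintype.card_piFinset, Finset.prod_const, Finset.card_univ, Fintype.card_fin]
  rw [hcard]
  have hmaps : ∀ f ∈ Fintype.piFinset (fun _ : Fin r => S), Finset.univ.lcm f ∈ T := by
    intro f hf
    rw [Fintype.mem_piFinset] at hf
    have hdvdk : Finset.univ.lcm f ∣ k :=
      Finset.lcm_dvd (fun i _ => (hmem _ (hf i)).2.2)
    have hpos : 0 < Finset.univ.lcm f := Nat.pos_of_dvd_of_pos hdvdk hk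
    have hdvdprod : Finset.univ.lcm f ∣ ∏ i : Fin r, f i :=
      Finset.lcm_dvd (fun i hi => Finset.dvd_prod_of_mem f hi)
    have hprodpos : 0 < ∏ i : Fin r, f i :=
      Finset.prod_pos (fun i _ => (hmem _ (hf i)).1)
    have hle : Finset.univ.lcm f ≤ Q ^ r := by
      calc Finset.univ.lcm f ≤ ∏ i : Fin r, f i := Nat.le_of_dvd hprodpos hdvdprod
      _ ≤ ∏ _i : Fin r, Q := Finset.prod_le_prod' (fun i _ => (hmem _ (hf i)).2.1)
      _ = Q ^ r := by rw [Finset.prod_const, Finset.card_univ, Fintype.card_fin]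
    simp only [hT, mem_filter, mem_Icc]
    exact ⟨⟨hpos, hle⟩, hdvdk⟩
  rw [Finset.card_eq_sum_card_fiberwise hmaps]
  apply Finset.sum_le_sum
  intro d hd
  have hd0 : d ≠ 0 := by
    simp only [hT, mem_filter, mem_Icc] at hd; omega
  have hsub : (Fintype.piFinset (fun _ : Fin r => S)).filter (fun f => Finset.univ.lcm f = d)
      ⊆ Fintype.piFinset (fun _ : Fin r => d.divisors) := by
    intro f hf
    rw [Finset.mem_filter, Fintype.mem_piFinset] at hf
    rw [Fintype.mem_piFinset]
    intro i
    rw [Nat.mem_divisors]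
    exact ⟨hf.2 ▸ Finset.dvd_lcm (Finset.mem_univ i), hd0⟩
  calc _ ≤ (Fintype.piFinset (fun _ : Fin r => d.divisors)).card := Finset.card_le_card hsub
  _ = d.divisors.card ^ r := by
    rw [Fintype.card_piFinset, Finset.prod_const, Finset.card_univ, Fintype.card_fin]

private lemma F_rec (x r : ℕ) :
    ∑ n ∈ Icc 1 x, ((n.divisors.card : ℝ))^(r+1) / n
      ≤ (∑ n ∈ Icc 1 x, ((n.divisors.card : ℝ))^r / n)^2 := by
  classical
  have step1 : ∀ n ∈ Icc 1 x, ((n.divisors.card : ℝ))^(r+1) / n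
      ≤ (∑ d ∈ n.divisors, ((d.divisors.card : ℝ))^r * (((n/d).divisors.card : ℝ))^r) / n := by
    intro n hn
    rw [mem_Icc] at hn
    have hn0 : 0 < n := by omega
    have hn0R : (0:ℝ) < n := by exact_mod_cast hn0
    rw [div_le_div_iff_of_pos_right hn0R]
    have key : ((n.divisors.card : ℝ))^(r+1)
        = ∑ _d ∈ n.divisors, ((n.divisors.card : ℝ))^r := by
      rw [Finset.sum_const, nsmul_eq_mul, pow_succ, mul_comm]
    rw [key]
    apply Finset.sum_le_sum
    intro d hd
    have hd' := Nat.mem_divisors.mp hd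
    have hdpos : 0 < d := Nat.pos_of_mem_divisors hd
    have hq : d * (n / d) = n := Nat.mul_div_cancel' hd'.1
    have hqpos : 0 < n / d := Nat.div_pos (Nat.le_of_dvd hn0 hd'.1) hdpos
    have htau : (n.divisors.card : ℝ) ≤ (d.divisors.card : ℝ) * ((n/d).divisors.card : ℝ) := by
      have := tau_submult d (n/d) (by omega) (by omega)
      rw [hq] at this
      exact_mod_cast this
    calc ((n.divisors.card : ℝ))^r ≤ ((d.divisors.card : ℝ) * ((n/d).divisors.card : ℝ))^r := by
          apply pow_le_pow_left₀ (by positivity) htau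
    _ = _ := mul_pow _ _ _
  have step2 : ∑ n ∈ Icc 1 x,
      (∑ d ∈ n.divisors, ((d.divisors.card : ℝ))^r * (((n/d).divisors.card : ℝ))^r) / n
      ≤ (∑ n ∈ Icc 1 x, ((n.divisors.card : ℝ))^r / n)^2 := by
    have lhs_eq : ∑ n ∈ Icc 1 x,
        (∑ d ∈ n.divisors, ((d.divisors.card : ℝ))^r * (((n/d).divisors.card : ℝ))^r) / n
        = ∑ p ∈ (Icc 1 x).sigma (fun n => n.divisors),
            ((p.2.divisors.card : ℝ))^r * (((p.1/p.2).divisors.card : ℝ))^r / p.1 := by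
      simp only [Finset.sum_sigma, Finset.sum_div]
    rw [lhs_eq]
    set G : ℕ × ℕ → ℝ := fun p =>
      ((p.1.divisors.card : ℝ))^r * ((p.2.divisors.card : ℝ))^r / (p.1 * p.2) with hG
    set φ : (Σ _ : ℕ, ℕ) → ℕ × ℕ := fun p => (p.2, p.1 / p.2) with hφ
    have hmemA : ∀ p ∈ (Icc 1 x).sigma (fun n => n.divisors),
        1 ≤ p.1 ∧ p.1 ≤ x ∧ p.2 ∣ p.1 ∧ 1 ≤ p.2 := by
      intro p hp
      rw [Finset.mem_sigma, mem_Icc] at hp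
      have := Nat.mem_divisors.mp hp.2
      exact ⟨hp.1.1, hp.1.2, this.1, Nat.pos_of_mem_divisors hp.2⟩
    have hinj : Set.InjOn φ ((Icc 1 x).sigma (fun n => n.divisors)) := by
      intro p hp q hq hpq
      obtain ⟨hp1, _, hpd, hp2⟩ := hmemA p hp
      obtain ⟨hq1, _, hqd, hq2⟩ := hmemA q hq
      simp only [hφ, Prod.mk.injEq] at hpq
      have h1 : p.1 = q.1 := by
        calc p.1 = p.2 * (p.1 / p.2) := (Nat.mul_div_cancel' hpd).symm
        _ = q.2 * (q.1 / q.2) := by rw [hpq.2, hpq.1]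
        _ = q.1 := Nat.mul_div_cancel' hqd
      obtain ⟨a, b⟩ := p
      obtain ⟨c, d⟩ := q
      simp only at h1 hpq
      subst h1
      rw [hpq.1]
    have heq : ∀ p ∈ (Icc 1 x).sigma (fun n => n.divisors),
        ((p.2.divisors.card : ℝ))^r * (((p.1/p.2).divisors.card : ℝ))^r / p.1 = G (φ p) := by
      intro p hp
      obtain ⟨hp1, _, hpd, hp2⟩ := hmemA p hp
      simp only [hG, hφ]
      congr 2
      rw [← Nat.cast_mul, Nat.mul_div_cancel' hpd]
    rw [Finset.sum_congr rfl heq, ← Finset.sum_image (fun p hp q hq h => hinj hp hq h)]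
    have hsub : ((Icc 1 x).sigma (fun n => n.divisors)).image φ ⊆ Icc 1 x ×ˢ Icc 1 x := by
      intro q hq
      rw [Finset.mem_image] at hq
      obtain ⟨p, hp, rfl⟩ := hq
      obtain ⟨hp1, hpx, hpd, hp2⟩ := hmemA p hp
      rw [Finset.mem_product, mem_Icc, mem_Icc]
      have h2 : p.2 ≤ x := le_trans (Nat.le_of_dvd (by omega) hpd) hpx
      have h3 : 1 ≤ p.1 / p.2 := Nat.div_pos (Nat.le_of_dvd (by omega) hpd) hp2
      have h4 : p.1 / p.2 ≤ x := le_trans (Nat.div_le_self _ _) hpx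
      exact ⟨⟨hp2, h2⟩, h3, h4⟩
    calc _ ≤ ∑ q ∈ Icc 1 x ×ˢ Icc 1 x, G q := by
          apply Finset.sum_le_sum_of_subset_of_nonneg hsub
          intro q _ _
          simp only [hG]
          positivity
    _ = (∑ n ∈ Icc 1 x, ((n.divisors.card : ℝ))^r / n)^2 := by
        rw [sq, Finset.sum_mul_sum]
        rw [Finset.sum_product]
        apply Finset.sum_congr rfl; intro a _
        apply Finset.sum_congr rfl; intro b _
        simp only [hG]
        rw [div_mul_div_comm]
  exact le_trans (Finset.sum_le_sum step1) step2

private lemma F_le (x : ℕ) (r : ℕ) (hx : 1 ≤ x) :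
    ∑ n ∈ Icc 1 x, ((n.divisors.card : ℝ))^r / n ≤ (1 + Real.log x)^(2^r) := by
  have hlog : (0:ℝ) ≤ 1 + Real.log x := by
    have : (0:ℝ) ≤ Real.log x := Real.log_nonneg (by exact_mod_cast hx)
    linarith
  induction r with
  | zero =>
    simp only [pow_zero, pow_one]
    have : ∑ n ∈ Icc 1 x, (1:ℝ) / n = ((harmonic x : ℚ) : ℝ) := by
      rw [harmonic_eq_sum_Icc]
      push_cast
      simp [one_div]
    rw [this]
    exact harmonic_le_one_add_log x
  | succ r ih =>
    have h1 : ∑ n ∈ Icc 1 x, ((n.divisors.card : ℝ))^(r+1) / n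
        ≤ (∑ n ∈ Icc 1 x, ((n.divisors.card : ℝ))^r / n)^2 := F_rec x r
    have h0 : (0:ℝ) ≤ ∑ n ∈ Icc 1 x, ((n.divisors.card : ℝ))^r / n := by positivity
    calc _ ≤ (∑ n ∈ Icc 1 x, ((n.divisors.card : ℝ))^r / n)^2 := h1
    _ ≤ ((1 + Real.log x)^(2^r))^2 := pow_le_pow_left₀ h0 ih 2
    _ = (1 + Real.log x)^(2^(r+1)) := by rw [← pow_mul, pow_succ]

private lemma swap_sum (N P : ℕ) (w : ℕ → ℝ) :
    ∑ k ∈ Icc 1 N, ∑ d ∈ (Icc 1 P).filter (fun d => d ∣ k), w d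
      = ∑ d ∈ Icc 1 P, w d * (((Icc 1 N).filter (fun k => d ∣ k)).card : ℝ) := by
  classical
  simp_rw [Finset.sum_filter]
  rw [Finset.sum_comm]
  apply Finset.sum_congr rfl
  intro d _
  rw [← Finset.sum_filter, Finset.sum_const, nsmul_eq_mul, mul_comm]

private lemma count_div (N d : ℕ) :
    (((Icc 1 N).filter (fun k => d ∣ k)).card : ℕ) = N / d := by
  have h : Icc 1 N = Ioc 0 N := by
    ext k
    simp only [mem_Icc, mem_Ioc]
    omega
  rw [h, Nat.Ioc_filter_dvd_card_eq_div N d]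

theorem truncated_divisor_moment :
    ∃ C : ℝ, 0 < C ∧ ∀ r M Q : ℕ, 1 ≤ r → 2 ≤ M → 2 ≤ Q →
      ((∑ k ∈ Finset.Icc 1 (2 * M),
          (((Finset.Icc 1 Q).filter (fun q => q ∣ k)).card : ℝ) ^ r)
        ≤ C * ((M : ℝ) * ((r : ℝ) * Real.log Q) ^ (2 ^ r) + (Q : ℝ) ^ r))
      ∧ (Q ^ r ≤ M →
        (∑ k ∈ Finset.Icc 1 (2 * M),
            (((Finset.Icc 1 Q).filter (fun q => q ∣ k)).card : ℝ) ^ r)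
          ≤ C * (M : ℝ) * ((r : ℝ) * Real.log Q) ^ (2 ^ r)) := by
  classical
  refine ⟨10000, by norm_num, ?_⟩
  intro r M Q hr hM hQ
  set t : ℝ := (r : ℝ) * Real.log Q with ht
  set LHS := ∑ k ∈ Finset.Icc 1 (2 * M),
      (((Finset.Icc 1 Q).filter (fun q => q ∣ k)).card : ℝ) ^ r with hLHS
  have hlog2 : (0.6931471803 : ℝ) < Real.log 2 := Real.log_two_gt_d9
  have hlogQ : Real.log 2 ≤ Real.log Q := by
    apply Real.log_le_log (by norm_num)
    exact_mod_cast hQ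
  have ht_pos : 0 < t := by
    have hr1 : (1:ℝ) ≤ (r:ℝ) := by exact_mod_cast hr
    have : (0:ℝ) < Real.log Q := by linarith
    positivity
  have htlb : (r : ℝ) * Real.log 2 ≤ t := by
    have hr0 : (0:ℝ) ≤ (r:ℝ) := by positivity
    exact mul_le_mul_of_nonneg_left hlogQ hr0
  -- main analytic bound
  have hmain : LHS ≤ 10000 * (M : ℝ) * t ^ (2 ^ r) := by
    set P := Q ^ r with hP
    have hP1 : 1 ≤ P := Nat.one_le_pow _ _ (by omega)
    -- Step 1: LHS ≤ 2M * F(P, r)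
    have hstep : LHS ≤ 2 * (M:ℝ) * ∑ n ∈ Icc 1 P, ((n.divisors.card : ℝ))^r / n := by
      have h1 : LHS ≤ ∑ k ∈ Icc 1 (2*M), ∑ d ∈ (Icc 1 P).filter (fun d => d ∣ k),
          ((d.divisors.card : ℝ))^r := by
        apply Finset.sum_le_sum
        intro k hk
        rw [mem_Icc] at hk
        exact_mod_cast count_pow_le Q r k (by omega)
      have h2 : ∑ k ∈ Icc 1 (2*M), ∑ d ∈ (Icc 1 P).filter (fun d => d ∣ k),
            ((d.divisors.card : ℝ))^r
          = ∑ d ∈ Icc 1 P, ((d.divisors.card : ℝ))^r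
              * (((Icc 1 (2*M)).filter (fun k => d ∣ k)).card : ℝ) :=
        swap_sum (2*M) P _
      have h3 : ∑ d ∈ Icc 1 P, ((d.divisors.card : ℝ))^r
            * (((Icc 1 (2*M)).filter (fun k => d ∣ k)).card : ℝ)
          ≤ ∑ d ∈ Icc 1 P, ((d.divisors.card : ℝ))^r * ((2*M : ℝ) / d) := by
        apply Finset.sum_le_sum
        intro d hd
        apply mul_le_mul_of_nonneg_left _ (by positivity)
        rw [count_div (2*M) d]
        calc ((((2*M) / d : ℕ)) : ℝ) ≤ ((2*M : ℕ) : ℝ) / (d : ℝ) := Nat.cast_div_le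
        _ = (2*M : ℝ) / d := by push_cast; ring
      have h4 : ∑ d ∈ Icc 1 P, ((d.divisors.card : ℝ))^r * ((2*M : ℝ) / d)
          = 2 * (M:ℝ) * ∑ n ∈ Icc 1 P, ((n.divisors.card : ℝ))^r / n := by
        rw [Finset.mul_sum]
        apply Finset.sum_congr rfl
        intro d _
        ring
      calc LHS ≤ _ := h1
      _ = _ := h2
      _ ≤ _ := h3
      _ = _ := h4
    have hF : ∑ n ∈ Icc 1 P, ((n.divisors.card : ℝ))^r / n ≤ (1 + t) ^ (2^r) := by
      have := F_le P r hP1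
      have hlogP : Real.log (P:ℝ) = t := by
        rw [hP]
        push_cast
        rw [Real.log_pow]
      rwa [hlogP] at this
    have hMnn : (0:ℝ) ≤ (M:ℝ) := by positivity
    -- trivial bound
    have htriv : LHS ≤ 2 * (M:ℝ) * (Q:ℝ)^r := by
      have hterm : ∀ k ∈ Icc 1 (2*M),
          (((Finset.Icc 1 Q).filter (fun q => q ∣ k)).card : ℝ) ^ r ≤ (Q:ℝ)^r := by
        intro k _
        apply pow_le_pow_left₀ (by positivity)
        have : ((Icc 1 Q).filter (fun q => q ∣ k)).card ≤ (Icc 1 Q).card :=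
          Finset.card_le_card (Finset.filter_subset _ _)
        rw [Nat.card_Icc] at this
        exact_mod_cast le_trans this (by omega)
      calc LHS ≤ ∑ _k ∈ Icc 1 (2*M), (Q:ℝ)^r := Finset.sum_le_sum hterm
      _ = 2 * (M:ℝ) * (Q:ℝ)^r := by
          rw [Finset.sum_const, Nat.card_Icc, nsmul_eq_mul]
          push_cast
          ring
    have h2Mnn : (0:ℝ) ≤ 2 * (M:ℝ) := by positivity
    have hMt : (0:ℝ) ≤ (M:ℝ) * t ^ (2^r) := by positivity
    have hLF : LHS ≤ 2 * (M:ℝ) * ((1+t)^(2^r)) :=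
      le_trans hstep (mul_le_mul_of_nonneg_left hF h2Mnn)
    by_cases hr3 : r ≤ 3
    · -- small r
      have ht069 : (0.6931471803 : ℝ) ≤ t := by
        have hr1 : (1:ℝ) ≤ (r:ℝ) := by exact_mod_cast hr
        nlinarith [htlb, hlog2]
      have h1t : 1 + t ≤ 2.5 * t := by linarith
      have h28 : 2^r ≤ 8 := le_trans (Nat.pow_le_pow_right (by norm_num) hr3) (by norm_num)
      have hpow : (1+t)^(2^r) ≤ 2.5^8 * t^(2^r) := by
        calc (1+t)^(2^r) ≤ (2.5*t)^(2^r) := pow_le_pow_left₀ (by linarith) h1t _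
        _ = 2.5^(2^r) * t^(2^r) := mul_pow _ _ _
        _ ≤ 2.5^8 * t^(2^r) := by
            apply mul_le_mul_of_nonneg_right _ (by positivity)
            exact pow_le_pow_right₀ (by norm_num) h28
      calc LHS ≤ 2 * (M:ℝ) * ((1+t)^(2^r)) := hLF
      _ ≤ 2 * (M:ℝ) * (2.5^8 * t^(2^r)) := mul_le_mul_of_nonneg_left hpow h2Mnn
      _ = (2 * 2.5^8) * ((M:ℝ) * t^(2^r)) := by ring
      _ ≤ 10000 * ((M:ℝ) * t^(2^r)) := by linarith [hMt]
      _ = 10000 * (M:ℝ) * t^(2^r) := by ring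
    · have hr4 : 4 ≤ r := by omega
      have hr4R : (4:ℝ) ≤ (r:ℝ) := by exact_mod_cast hr4
      have hte : Real.exp 1 ≤ t := by
        have h1 : Real.exp 1 < 2.7182818286 := Real.exp_one_lt_d9
        nlinarith [htlb, hlog2]
      have hexp3 : Real.exp 1 ≤ 3 := by
        have h1 : Real.exp 1 < 2.7182818286 := Real.exp_one_lt_d9
        linarith
      by_cases h2t : ((2^r : ℕ) : ℝ) ≤ t
      · have h1t : 1 + t ≤ t * Real.exp (1/t) := by
          have := Real.add_one_le_exp (1/t)
          calc 1 + t = t * (1/t + 1) := by field_simp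
          _ ≤ t * Real.exp (1/t) := mul_le_mul_of_nonneg_left this (le_of_lt ht_pos)
        have hpow : (1+t)^(2^r) ≤ t^(2^r) * 3 := by
          calc (1+t)^(2^r) ≤ (t * Real.exp (1/t))^(2^r) :=
                pow_le_pow_left₀ (by linarith) h1t _
          _ = t^(2^r) * (Real.exp (1/t))^(2^r) := mul_pow _ _ _
          _ ≤ t^(2^r) * 3 := by
              apply mul_le_mul_of_nonneg_left _ (by positivity)
              have he : (Real.exp (1/t))^(2^r) = Real.exp (((2^r : ℕ):ℝ) * (1/t)) := by
                rw [← Real.exp_nat_mul]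
              rw [he]
              calc Real.exp (((2^r : ℕ):ℝ) * (1/t)) ≤ Real.exp 1 := by
                    apply Real.exp_le_exp.mpr
                    rw [mul_one_div, div_le_one ht_pos]
                    exact h2t
              _ ≤ 3 := hexp3
        calc LHS ≤ 2 * (M:ℝ) * ((1+t)^(2^r)) := hLF
        _ ≤ 2 * (M:ℝ) * (t^(2^r) * 3) := mul_le_mul_of_nonneg_left hpow h2Mnn
        _ = 6 * ((M:ℝ) * t^(2^r)) := by ring
        _ ≤ 10000 * ((M:ℝ) * t^(2^r)) := by linarith [hMt]
        _ = 10000 * (M:ℝ) * t^(2^r) := by ring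
      · push_neg at h2t
        have hQpos : (0:ℝ) < (Q:ℝ) := by
          have : 0 < Q := by omega
          exact_mod_cast this
        have hQr : (Q:ℝ)^r = Real.exp t := by
          rw [← Real.exp_log (show (0:ℝ) < (Q:ℝ)^r by positivity), Real.log_pow]
        have hexpbound : Real.exp t ≤ t^(2^r) := by
          calc Real.exp t ≤ Real.exp ((2^r : ℕ):ℝ) := Real.exp_le_exp.mpr (le_of_lt h2t)
          _ = (Real.exp 1)^(2^r) := by rw [← Real.exp_nat_mul, mul_one]
          _ ≤ t^(2^r) := pow_le_pow_left₀ (le_of_lt (Real.exp_pos 1)) hte _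
        calc LHS ≤ 2 * (M:ℝ) * (Q:ℝ)^r := htriv
        _ ≤ 2 * (M:ℝ) * t^(2^r) := by
            rw [hQr]; exact mul_le_mul_of_nonneg_left hexpbound h2Mnn
        _ = 2 * ((M:ℝ) * t^(2^r)) := by ring
        _ ≤ 10000 * ((M:ℝ) * t^(2^r)) := by linarith [hMt]
        _ = 10000 * (M:ℝ) * t^(2^r) := by ring
  constructor
  · have hQr : (0:ℝ) ≤ (Q:ℝ)^r := by positivity
    calc LHS ≤ 10000 * (M:ℝ) * t^(2^r) := hmain
    _ ≤ 10000 * ((M:ℝ) * t^(2^r) + (Q:ℝ)^r) := by linarith [hQr]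
  · intro _
    exact hmain
end
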